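/- Assume σ ≠ 0. For every integer 1 ≤ l ≤ m, the conditional expectation of the number of old blocks re-observed with frequency l, given only the number of blocks, satisfies E[R_l | K_n = j] = (1/C(n,j;σ))·binom(m,l)·(−σ·(1−σ)_{(l−1)↑})·Σ_{s=1}^{n−(j−1)} binom(n,s)·C(s,1;σ−l)·C(n−s, j−1; σ)·Σ_{k=0}^{m} (V_{n+m,j+k}/V_{n,j})·C(m−l, k; σ, −n + s + (j−1)σ)/σ^k. -/

import Mathlib

open Finset

attribute [local instance] Classical.propDecidable

noncomputable section

/-- Rising factorial `x(x+1)⋯(x+N−1)`. -/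
def risingFac (x : ℝ) (N : ℕ) : ℝ := ∏ i ∈ Finset.range N, (x + i)

/-- Falling factorial `x(x−1)⋯(x−N+1)`. -/
def fallingFac (x : ℝ) (N : ℕ) : ℝ := ∏ i ∈ Finset.range N, (x - i)

/-- Noncentral generalized factorial coefficient `C(N,k;σ,γ)`. -/
def gfc (N k : ℕ) (σ γ : ℝ) : ℝ :=
  (1 / (Nat.factorial k : ℝ)) *
    ∑ i ∈ Finset.range (k + 1),
      (-1 : ℝ) ^ i * (Nat.choose k i : ℝ) * risingFac (-(i : ℝ) * σ - γ) N

/-- Central generalized factorial coefficient `C(N,k;σ)`. -/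
def cgfc (N k : ℕ) (σ : ℝ) : ℝ := gfc N k σ 0

/-- Binomial coefficient over `ℤ`, zero unless `0 ≤ b ≤ a`. -/
def ibinom (a b : ℤ) : ℝ :=
  if 0 ≤ b ∧ b ≤ a then (Nat.choose a.toNat b.toNat : ℝ) else 0

/-- Multinomial coefficient `m!/((l!)^r (m−rl)!)`, zero if `rl > m`. -/
def multinom (m l r : ℕ) : ℝ :=
  if r * l ≤ m then
    (Nat.factorial m : ℝ) / ((Nat.factorial l : ℝ) ^ r * (Nat.factorial (m - r * l) : ℝ))
  else 0

/-- `P` is a set partition of the finset `s`. -/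
def IsPartOn {α : Type*} (s : Finset α) (P : Finset (Finset α)) : Prop :=
  (∀ B ∈ P, B ⊆ s) ∧ ∅ ∉ P ∧ ∀ a ∈ s, ∃! B, B ∈ P ∧ a ∈ B

/-- Restriction of a partition to `s`. -/
def restrictPart {α : Type*} [DecidableEq α] (P : Finset (Finset α)) (s : Finset α) :
    Finset (Finset α) := (P.image fun C => C ∩ s).erase ∅

/-- Gibbs probability of a partition with block sizes `|C|` and `VN k` the Gibbs weight. -/
def gibbsW {α : Type*} (σ : ℝ) (VN : ℕ → ℝ) (P : Finset (Finset α)) : ℝ :=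
  VN P.card * ∏ C ∈ P, risingFac (1 - σ) (C.card - 1)

/-- Ewens–Pitman weight system. -/
def EPV (σ θ : ℝ) : ℕ → ℕ → ℝ :=
  fun N k => (∏ i ∈ Finset.range k, (θ + (i : ℝ) * σ)) / risingFac θ N

/-- The "old" elements `{1,…,n}` inside `{1,…,n+m}`. -/
def oldSet (n m : ℕ) : Finset (Fin (n + m)) :=
  Finset.univ.filter fun x => (x : ℕ) < n

/-- Number of new elements in the block of `ρ` containing the old block `Bi`. -/
def Scount (n m : ℕ) (Bi : Finset (Fin (n + m))) (ρ : Finset (Finset (Fin (n + m)))) : ℕ :=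
  ∑ C ∈ ρ.filter (fun C => Bi ⊆ C), (C \ oldSet n m).card

/-- Partitions of `{1,…,n+m}` extending the partition `πP` of the old elements. -/
def extensions (n m : ℕ) (πP : Finset (Finset (Fin (n + m)))) :
    Finset (Finset (Finset (Fin (n + m)))) :=
  Finset.univ.filter fun ρ => IsPartOn Finset.univ ρ ∧ restrictPart ρ (oldSet n m) = πP

/-- Conditional expectation given complete information (the initial partition `πP`). -/
def condExpPi (σ : ℝ) (V : ℕ → ℕ → ℝ) (n m : ℕ) (πP : Finset (Finset (Fin (n + m))))
    (f : Finset (Finset (Fin (n + m))) → ℝ) : ℝ :=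
  (∑ ρ ∈ extensions n m πP, f ρ * gibbsW σ (V (n + m)) ρ) /
    (∑ ρ ∈ extensions n m πP, gibbsW σ (V (n + m)) ρ)

/-- Partitions of `{1,…,n+m}` whose restriction to the old elements has exactly `j` blocks. -/
def withJ (n m j : ℕ) : Finset (Finset (Finset (Fin (n + m)))) :=
  Finset.univ.filter fun ρ =>
    IsPartOn Finset.univ ρ ∧ (restrictPart ρ (oldSet n m)).card = j

/-- Partitions of `s` with exactly `j` blocks. -/
def partsJOf {α : Type*} [Fintype α] (s : Finset α) (j : ℕ) :
    Finset (Finset (Finset α)) :=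
  Finset.univ.filter fun π' => IsPartOn s π' ∧ π'.card = j

/-- Conditional expectation given the incomplete information `K_n = j`. -/
def condExpK (σ : ℝ) (V : ℕ → ℕ → ℝ) (n m j : ℕ)
    (f : Finset (Finset (Fin (n + m))) → ℝ) : ℝ :=
  (∑ ρ ∈ withJ n m j, f ρ * gibbsW σ (V (n + m)) ρ) /
    (∑ π' ∈ partsJOf (oldSet n m) j, gibbsW σ (V n) π')

/-- Number of old blocks (indexed by `B`) re-observed in the additional sample. -/
def RcntB (n m j : ℕ) (B : Fin j → Finset (Fin (n + m)))
    (ρ : Finset (Finset (Fin (n + m)))) : ℕ :=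
  (Finset.univ.filter fun i : Fin j => Scount n m (B i) ρ ≠ 0).card

/-- Number of old blocks (indexed by `B`) re-observed with frequency `l`. -/
def RlcntB (n m j l : ℕ) (B : Fin j → Finset (Fin (n + m)))
    (ρ : Finset (Finset (Fin (n + m)))) : ℕ :=
  (Finset.univ.filter fun i : Fin j => Scount n m (B i) ρ = l).card

/-- Number of blocks of the restriction whose containing block has a new element. -/
def Rcnt (n m : ℕ) (ρ : Finset (Finset (Fin (n + m)))) : ℕ :=
  ((restrictPart ρ (oldSet n m)).filter fun Bi =>
    ∃ C ∈ ρ, Bi ⊆ C ∧ (C \ oldSet n m) ≠ ∅).card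

/-- Number of blocks of the restriction whose containing block has exactly `l` new elements. -/
def Rlcnt (n m l : ℕ) (ρ : Finset (Finset (Fin (n + m)))) : ℕ :=
  ((restrictPart ρ (oldSet n m)).filter fun Bi =>
    ∃ C ∈ ρ, Bi ⊆ C ∧ (C \ oldSet n m).card = l).card

/-- Number of bijections from `Fin j` onto the blocks of `π'` satisfying `Q`. -/
def bijCount {α : Type*} [Fintype α] (j : ℕ) (π' : Finset (Finset α))
    (Q : (Fin j → Finset α) → Prop) : ℕ :=
  ((Finset.univ : Finset (Fin j → Finset α)).filter fun β =>
    Function.Injective β ∧ Finset.image β Finset.univ = π' ∧ Q β).card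

/-- Conditional expectation given almost-complete information. -/
def condExpTau (σ : ℝ) (V : ℕ → ℕ → ℝ) (n m j p : ℕ) (τ : Fin p → Fin j) (nτ : Fin p → ℕ)
    (f : Finset (Finset (Fin (n + m))) → ℝ) : ℝ :=
  (∑ ρ ∈ withJ n m j,
      (bijCount j (restrictPart ρ (oldSet n m)) (fun β => ∀ i, (β (τ i)).card = nτ i) : ℝ) *
        f ρ * gibbsW σ (V (n + m)) ρ) /
    (∑ π' ∈ partsJOf (oldSet n m) j,
      (bijCount j π' (fun β => ∀ i, (β (τ i)).card = nτ i) : ℝ) * gibbsW σ (V n) π')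

section Stage1

/-- Recursive form of the (noncentral) generalized factorial coefficients divided by `σ^k`. -/
def Wrec (σ γ : ℝ) : ℕ → ℕ → ℝ
  | 0, 0 => 1
  | 0, _ + 1 => 0
  | (M + 1), 0 => ((M : ℝ) - γ) * Wrec σ γ M 0
  | (M + 1), (k + 1) => Wrec σ γ M k + ((M : ℝ) - (k + 1) * σ - γ) * Wrec σ γ M (k + 1)

lemma risingFac_succ (x : ℝ) (N : ℕ) :
    risingFac x (N + 1) = risingFac x N * (x + N) := by
  simp [risingFac, Finset.prod_range_succ]

lemma risingFac_zero (x : ℝ) : risingFac x 0 = 1 := by simp [risingFac]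

lemma risingFac_add (x : ℝ) (a b : ℕ) :
    risingFac x (a + b) = risingFac x a * risingFac (x + a) b := by
  induction b with
  | zero => simp [risingFac_zero]
  | succ b ih =>
      rw [← Nat.add_assoc, risingFac_succ, ih, risingFac_succ]
      push_cast; ring

lemma risingFac_pos {x : ℝ} (hx : 0 < x) (N : ℕ) : 0 < risingFac x N := by
  apply Finset.prod_pos
  intro i _
  positivity

lemma gfc_zero_right (N : ℕ) (σ γ : ℝ) : gfc N 0 σ γ = risingFac (-γ) N := by
  simp [gfc]

lemma gfc_rec (N k : ℕ) (σ γ : ℝ) :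
    gfc (N + 1) (k + 1) σ γ =
      σ * gfc N k σ γ + ((N : ℝ) - (k + 1) * σ - γ) * gfc N (k + 1) σ γ := by
  have key : ∀ i : ℕ, risingFac (-(i : ℝ) * σ - γ) (N + 1)
      = risingFac (-(i : ℝ) * σ - γ) N * (((N : ℝ) - (k+1) * σ - γ) + ((k+1 : ℕ) - (i:ℝ)) * σ) := by
    intro i
    rw [risingFac_succ]; push_cast; ring
  have hchoose : ∀ i : ℕ, ((k+1 : ℕ) - (i:ℝ)) * ((k+1).choose i : ℝ)
      = (k+1 : ℝ) * (k.choose i : ℝ) := by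
    intro i
    rcases le_or_gt i (k+1) with h | h
    · have := Nat.choose_mul_succ_eq k i
      have h2 : ((k.choose i : ℕ) * (k+1) : ℕ) = ((k+1).choose i * (k + 1 - i) : ℕ) := this
      have h3 : ((k.choose i : ℝ)) * ((k:ℝ)+1) = ((k+1).choose i : ℝ) * ((k:ℝ) + 1 - i) := by
        have := congrArg (fun t : ℕ => (t : ℝ)) h2
        push_cast at this
        rw [Nat.cast_sub h] at this
        push_cast at this
        linarith [this]
      push_cast
      linarith [h3]
    · have h1 : (k+1).choose i = 0 := Nat.choose_eq_zero_of_lt h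
      have h2 : k.choose i = 0 := Nat.choose_eq_zero_of_lt (by omega)
      simp [h1, h2]
  have expand : ∑ i ∈ Finset.range (k + 2),
        (-1 : ℝ) ^ i * ((k+1).choose i : ℝ) * risingFac (-(i : ℝ) * σ - γ) (N+1)
      = ((N : ℝ) - (k+1) * σ - γ) * ∑ i ∈ Finset.range (k + 2),
            (-1 : ℝ) ^ i * ((k+1).choose i : ℝ) * risingFac (-(i : ℝ) * σ - γ) N
        + σ * (k+1 : ℝ) * ∑ i ∈ Finset.range (k + 2),
            (-1 : ℝ) ^ i * (k.choose i : ℝ) * risingFac (-(i : ℝ) * σ - γ) N := by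
    rw [Finset.mul_sum, Finset.mul_sum, ← Finset.sum_add_distrib]
    apply Finset.sum_congr rfl
    intro i _
    rw [key i]
    have h := hchoose i
    push_cast at h ⊢
    linear_combination ((-1:ℝ) ^ i * risingFac (-(i : ℝ) * σ - γ) N * σ) * h
  have shrink : ∑ i ∈ Finset.range (k + 2),
        (-1 : ℝ) ^ i * (k.choose i : ℝ) * risingFac (-(i : ℝ) * σ - γ) N
      = ∑ i ∈ Finset.range (k + 1),
        (-1 : ℝ) ^ i * (k.choose i : ℝ) * risingFac (-(i : ℝ) * σ - γ) N := by
    rw [Finset.sum_range_succ]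
    simp [Nat.choose_succ_self]
  rw [gfc, gfc, gfc, expand, shrink]
  have hfac : ((k+1).factorial : ℝ) = ((k+1 : ℝ)) * (k.factorial : ℝ) := by
    rw [Nat.factorial_succ]; push_cast; ring
  have hkf : (k.factorial : ℝ) ≠ 0 := by positivity
  have hk1 : ((k : ℝ) + 1) ≠ 0 := by positivity
  rw [hfac]
  field_simp [hfac]
  ring

lemma gfc_eq_Wrec (N k : ℕ) (σ γ : ℝ) : gfc N k σ γ = σ ^ k * Wrec σ γ N k := by
  induction N generalizing k with
  | zero =>
      cases k with
      | zero => simp [gfc, Wrec, risingFac_zero]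
      | succ k =>
          simp only [Wrec, mul_zero]
          rw [gfc]
          have : ∀ i ∈ Finset.range (k + 2),
              (-1 : ℝ) ^ i * ((k+1).choose i : ℝ) * risingFac (-(i : ℝ) * σ - γ) 0
              = (-1 : ℝ) ^ i * ((k+1).choose i : ℝ) := by
            intro i _; rw [risingFac_zero]; ring
          rw [Finset.sum_congr rfl this]
          have hz := Int.alternating_sum_range_choose_of_ne (n := k+1) (by omega)
          have : ((∑ i ∈ Finset.range (k + 2), (-1 : ℤ) ^ i * ((k+1).choose i : ℤ) : ℤ) : ℝ)
              = ∑ i ∈ Finset.range (k + 2), (-1 : ℝ) ^ i * ((k+1).choose i : ℝ) := by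
            push_cast; rfl
          rw [← this, hz]
          simp
  | succ N ih =>
      cases k with
      | zero =>
          have h0 := ih 0
          rw [gfc_zero_right] at h0
          simp only [pow_zero, one_mul] at h0
          rw [gfc_zero_right, risingFac_succ, h0]
          show Wrec σ γ N 0 * (-γ + ↑N) = σ ^ 0 * (((N : ℝ) - γ) * Wrec σ γ N 0)
          ring
      | succ k =>
          rw [gfc_rec, ih k, ih (k+1)]
          simp only [Wrec]
          ring

lemma Wrec_eq_zero_of_lt (σ γ : ℝ) : ∀ N k : ℕ, N < k → Wrec σ γ N k = 0 := by
  intro N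
  induction N with
  | zero => intro k hk; match k, hk with | (k+1), _ => rfl
  | succ N ih =>
      intro k hk
      match k, hk with
      | (k+1), hk =>
        have h1 : Wrec σ γ N k = 0 := ih k (by omega)
        have h2 : Wrec σ γ N (k+1) = 0 := ih (k+1) (by omega)
        show Wrec σ γ N k + ((N : ℝ) - (k + 1) * σ - γ) * Wrec σ γ N (k+1) = 0
        rw [h1, h2]; ring

end Stage1

section Stage2

variable {α : Type*} [DecidableEq α]

lemma IsPartOn.mem_unique {s : Finset α} {P : Finset (Finset α)} (h : IsPartOn s P)
    {B B' : Finset α} (hB : B ∈ P) (hB' : B' ∈ P) {a : α} (ha : a ∈ B) (ha' : a ∈ B') :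
    B = B' := by
  obtain ⟨hsub, -, huniq⟩ := h
  obtain ⟨C, -, hC⟩ := huniq a (hsub B hB ha)
  rw [hC B ⟨hB, ha⟩, hC B' ⟨hB', ha'⟩]

lemma IsPartOn.exists_mem {s : Finset α} {P : Finset (Finset α)} (h : IsPartOn s P)
    {a : α} (ha : a ∈ s) : ∃ B ∈ P, a ∈ B := by
  obtain ⟨B, hB, -⟩ := h.2.2 a ha
  exact ⟨B, hB.1, hB.2⟩

lemma IsPartOn.sum_card {s : Finset α} {P : Finset (Finset α)} (h : IsPartOn s P) :
    ∑ C ∈ P, C.card = s.card := by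
  have step1 : ∀ C ∈ P, C.card = ∑ a ∈ s, if a ∈ C then 1 else 0 := by
    intro C hC
    rw [← Finset.card_filter]
    congr 1
    rw [Finset.filter_mem_eq_inter, Finset.inter_eq_right.mpr (h.1 C hC)]
  rw [Finset.sum_congr rfl step1, Finset.sum_comm]
  have step2 : ∀ a ∈ s, (∑ C ∈ P, if a ∈ C then 1 else 0) = 1 := by
    intro a ha
    rw [← Finset.card_filter]
    obtain ⟨B, hB, haB⟩ := h.exists_mem ha
    rw [Finset.card_eq_one]
    refine ⟨B, ?_⟩
    ext C
    simp only [Finset.mem_filter, Finset.mem_singleton]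
    constructor
    · rintro ⟨hC, haC⟩; exact h.mem_unique hC hB haC haB
    · rintro rfl; exact ⟨hB, haB⟩
  rw [Finset.sum_congr rfl step2]
  simp

/-- Extensions of the partition `π` of `s` by the new elements `t`. -/
def extSet [Fintype α] (s t : Finset α) (π : Finset (Finset α)) :
    Finset (Finset (Finset α)) :=
  Finset.univ.filter fun ρ =>
    IsPartOn (s ∪ t) ρ ∧ ∀ C ∈ ρ, C ∩ s ∈ π ∨ C ∩ s = ∅

lemma mem_extSet [Fintype α] {s t : Finset α} {π ρ : Finset (Finset α)} :
    ρ ∈ extSet s t π ↔ IsPartOn (s ∪ t) ρ ∧ ∀ C ∈ ρ, C ∩ s ∈ π ∨ C ∩ s = ∅ := by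
  simp [extSet]

/-- The unique block of `ρ` containing `a` (junk value if not unique). -/
def blockOfPt (ρ : Finset (Finset α)) (a : α) : Finset α :=
  if h : ∃! C, C ∈ ρ ∧ a ∈ C then h.choose else ∅

lemma blockOfPt_spec {ρ : Finset (Finset α)} {a : α} (h : ∃! C, C ∈ ρ ∧ a ∈ C) :
    blockOfPt ρ a ∈ ρ ∧ a ∈ blockOfPt ρ a := by
  rw [blockOfPt, dif_pos h]
  exact h.choose_spec.1

lemma blockOfPt_eq {ρ : Finset (Finset α)} {a : α} (h : ∃! C, C ∈ ρ ∧ a ∈ C)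
    {C : Finset α} (hC : C ∈ ρ) (haC : a ∈ C) : blockOfPt ρ a = C := by
  rw [blockOfPt, dif_pos h]
  exact (h.choose_spec.2 C ⟨hC, haC⟩).symm ▸ rfl

end Stage2

section Stage3
set_option linter.unusedSectionVars false

variable {α : Type*} [DecidableEq α] [Fintype α]

lemma extSet_insert_sum {s t : Finset α} {π : Finset (Finset α)} {a : α}
    (hst : Disjoint s t) (has : a ∉ s) (hat : a ∉ t)
    (F : Finset (Finset α) → ℝ) :
    ∑ ρ ∈ extSet s (insert a t) π, F ρ
      = ∑ ρ' ∈ extSet s t π, (F (insert {a} ρ') +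
          ∑ C ∈ ρ', F (insert (insert a C) (ρ'.erase C))) := by
  have hast : a ∉ s ∪ t := by simp [has, hat]
  have hins : s ∪ insert a t = insert a (s ∪ t) := by
    ext x; simp [or_comm, or_assoc, or_left_comm]
  -- rewrite RHS summands as sums over `insert ∅ ρ'`
  have hrw : ∀ ρ' ∈ extSet s t π,
      (F (insert {a} ρ') + ∑ C ∈ ρ', F (insert (insert a C) (ρ'.erase C)))
        = ∑ C ∈ insert ∅ ρ', F (insert (insert a C) (ρ'.erase C)) := by
    intro ρ' hρ'
    have hne : (∅ : Finset α) ∉ ρ' := (mem_extSet.mp hρ').1.2.1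
    rw [Finset.sum_insert hne]
    congr 2
    · rw [Finset.erase_eq_of_notMem hne]
      rfl
  rw [Finset.sum_congr rfl hrw, Finset.sum_sigma']
  -- now a bijection between the sigma set and `extSet s (insert a t) π`
  refine (Finset.sum_nbij'
    (i := fun p => insert (insert a p.2) (p.1.erase p.2))
    (j := fun ρ => ⟨(insert ((blockOfPt ρ a).erase a) (ρ.erase (blockOfPt ρ a))).erase ∅,
      (blockOfPt ρ a).erase a⟩) ?_ ?_ ?_ ?_ ?_).symm
  · -- forward membership
    rintro ⟨ρ', C⟩ hp
    rw [Finset.mem_sigma] at hp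
    obtain ⟨hρ', hC⟩ := hp
    dsimp only at hρ' hC ⊢
    obtain ⟨⟨hsub, hnem, huniq⟩, hcond⟩ := mem_extSet.mp hρ'
    have hCsub : C ⊆ s ∪ t := by
      rcases Finset.mem_insert.mp hC with h | h
      · rw [h]; exact Finset.empty_subset _
      · exact hsub C h
    have haC : a ∉ C := fun h => hast (hCsub h)
    rw [mem_extSet]
    constructor
    · refine ⟨?_, ?_, ?_⟩
      · intro D hD
        rcases Finset.mem_insert.mp hD with rfl | hD
        · rw [hins]
          exact Finset.insert_subset_insert _ hCsub
        · exact (hsub D (Finset.mem_of_mem_erase hD)).trans (by rw [hins]; exact Finset.subset_insert _ _)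
      · intro h
        rcases Finset.mem_insert.mp h with h | h
        · exact (Finset.insert_ne_empty _ _) h.symm
        · exact hnem (Finset.mem_of_mem_erase h)
      · intro x hx
        rw [hins, Finset.mem_insert] at hx
        rcases hx with h | hx
        · refine ⟨insert a C, ⟨Finset.mem_insert_self _ _, h ▸ Finset.mem_insert_self a C⟩, ?_⟩
          rintro E ⟨hE, haE⟩
          rcases Finset.mem_insert.mp hE with rfl | hE
          · rfl
          · exact absurd (hsub E (Finset.mem_of_mem_erase hE) (h ▸ haE)) hast
        · have hxa : x ≠ a := fun h => hast (h ▸ hx)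
          obtain ⟨D', ⟨hD'm, hxD'⟩, hD'u⟩ := huniq x hx
          by_cases hDC : D' = C
          · refine ⟨insert a C, ⟨Finset.mem_insert_self _ _,
              Finset.mem_insert_of_mem (hDC ▸ hxD')⟩, ?_⟩
            rintro E ⟨hE, hxE⟩
            rcases Finset.mem_insert.mp hE with rfl | hE
            · rfl
            · exact absurd ((hD'u E ⟨Finset.mem_of_mem_erase hE, hxE⟩).symm ▸ hDC ▸
                (Finset.mem_erase.mp hE).1.symm) (by simp [hD'u E ⟨Finset.mem_of_mem_erase hE, hxE⟩, hDC, (Finset.mem_erase.mp hE).1])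
          · refine ⟨D', ⟨Finset.mem_insert_of_mem (Finset.mem_erase.mpr ⟨hDC, hD'm⟩), hxD'⟩, ?_⟩
            rintro E ⟨hE, hxE⟩
            rcases Finset.mem_insert.mp hE with rfl | hE
            · rcases Finset.mem_insert.mp hxE with h | h
              · exact absurd h hxa
              · have hCρ' : C ∈ ρ' := by
                  rcases Finset.mem_insert.mp hC with h' | h'
                  · rw [h'] at h; exact absurd h (Finset.notMem_empty x)
                  · exact h'
                exact absurd (hD'u C ⟨hCρ', h⟩).symm hDC
            · exact hD'u E ⟨Finset.mem_of_mem_erase hE, hxE⟩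
    · intro D hD
      rcases Finset.mem_insert.mp hD with rfl | hD
      · have : insert a C ∩ s = C ∩ s := by
          ext x; simp only [Finset.mem_inter, Finset.mem_insert]
          constructor
          · rintro ⟨rfl | h, hs2⟩
            · exact absurd hs2 has
            · exact ⟨h, hs2⟩
          · rintro ⟨h, hs2⟩; exact ⟨Or.inr h, hs2⟩
        rw [this]
        rcases Finset.mem_insert.mp hC with h | h
        · right; rw [h]; exact Finset.empty_inter s
        · exact hcond C h
      · exact hcond D (Finset.mem_of_mem_erase hD)
  · -- backward membership
    intro ρ hρ
    obtain ⟨⟨hsub, hnem, huniq⟩, hcond⟩ := mem_extSet.mp hρ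
    have hauniv : a ∈ s ∪ insert a t := by simp
    have hex : ∃! D, D ∈ ρ ∧ a ∈ D := huniq a hauniv
    obtain ⟨hCam, haCa⟩ := blockOfPt_spec hex
    set Ca := blockOfPt ρ a with hCa
    set C := Ca.erase a with hCdef
    set ρ' := (insert C (ρ.erase Ca)).erase ∅ with hρ'def
    have hano : ∀ D ∈ ρ.erase Ca, a ∉ D := by
      intro D hD haD
      exact (Finset.mem_erase.mp hD).1 (hex.unique ⟨Finset.mem_of_mem_erase hD, haD⟩ ⟨hCam, haCa⟩)
    have hDsub : ∀ D ∈ ρ.erase Ca, D ⊆ s ∪ t := by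
      intro D hD x hx
      have := hsub D (Finset.mem_of_mem_erase hD) hx
      rw [hins, Finset.mem_insert] at this
      rcases this with rfl | h
      · exact absurd hx (hano D hD)
      · exact h
    have hCsub : C ⊆ s ∪ t := by
      intro x hx
      obtain ⟨hxa, hxCa⟩ := Finset.mem_erase.mp hx
      have := hsub Ca hCam hxCa
      rw [hins, Finset.mem_insert] at this
      rcases this with rfl | h
      · exact absurd rfl hxa
      · exact h
    have hmemρ' : ∀ E, E ∈ ρ' ↔ (E ≠ ∅ ∧ (E = C ∨ E ∈ ρ.erase Ca)) := by
      intro E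
      rw [hρ'def, Finset.mem_erase, Finset.mem_insert]
    rw [Finset.mem_sigma]
    constructor
    · rw [mem_extSet]
      constructor
      · refine ⟨?_, ?_, ?_⟩
        · intro D hD
          rcases (hmemρ' D).mp hD with ⟨-, rfl | h⟩
          · exact hCsub
          · exact hDsub D h
        · intro h
          exact ((hmemρ' ∅).mp h).1 rfl
        · intro x hx
          have hxa : x ≠ a := fun h => hast (h ▸ hx)
          have hxu : x ∈ s ∪ insert a t := by
            rw [hins]; exact Finset.mem_insert_of_mem hx
          obtain ⟨D, ⟨hDm, hxD⟩, hDu⟩ := huniq x hxu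
          by_cases hDCa : D = Ca
          · refine ⟨C, ⟨?_, ?_⟩, ?_⟩
            · rw [hmemρ']
              refine ⟨?_, Or.inl rfl⟩
              rw [hCdef, ← Finset.nonempty_iff_ne_empty]
              exact ⟨x, Finset.mem_erase.mpr ⟨hxa, hDCa ▸ hxD⟩⟩
            · exact Finset.mem_erase.mpr ⟨hxa, hDCa ▸ hxD⟩
            · rintro E ⟨hE, hxE⟩
              rcases ((hmemρ' E).mp hE).2 with rfl | hE'
              · rfl
              · have hED := hDu E ⟨Finset.mem_of_mem_erase hE', hxE⟩
                exact absurd (hED.trans hDCa) (Finset.mem_erase.mp hE').1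
          · refine ⟨D, ⟨?_, hxD⟩, ?_⟩
            · rw [hmemρ']
              exact ⟨fun h => hnem (by rw [← h]; exact hDm), Or.inr (Finset.mem_erase.mpr ⟨hDCa, hDm⟩)⟩
            · rintro E ⟨hE, hxE⟩
              rcases ((hmemρ' E).mp hE).2 with rfl | hE'
              · exact absurd (hDu Ca ⟨hCam, Finset.mem_of_mem_erase hxE⟩).symm hDCa
              · exact hDu E ⟨Finset.mem_of_mem_erase hE', hxE⟩
      · intro D hD
        rcases ((hmemρ' D).mp hD).2 with rfl | hD'
        · have : C ∩ s = Ca ∩ s := by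
            ext x
            simp only [hCdef, Finset.mem_inter, Finset.mem_erase]
            constructor
            · rintro ⟨⟨-, h1⟩, h2⟩; exact ⟨h1, h2⟩
            · rintro ⟨h1, h2⟩
              refine ⟨⟨?_, h1⟩, h2⟩
              rintro rfl
              exact has h2
          rw [this]
          exact hcond Ca hCam
        · exact hcond D (Finset.mem_of_mem_erase hD')
    · by_cases hC : C = ∅
      · rw [hC]; exact Finset.mem_insert_self _ _
      · exact Finset.mem_insert_of_mem ((hmemρ' C).mpr ⟨hC, Or.inl rfl⟩)
  · -- left inverse
    rintro ⟨ρ', C⟩ hp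
    rw [Finset.mem_sigma] at hp
    obtain ⟨hρ', hC⟩ := hp
    dsimp only at hρ' hC ⊢
    obtain ⟨⟨hsub, hnem, huniq⟩, hcond⟩ := mem_extSet.mp hρ'
    have hCsub : C ⊆ s ∪ t := by
      rcases Finset.mem_insert.mp hC with h | h
      · rw [h]; exact Finset.empty_subset _
      · exact hsub C h
    have haC : a ∉ C := fun h => hast (hCsub h)
    set ρ := insert (insert a C) (ρ'.erase C) with hρdef
    have hins_notmem : insert a C ∉ ρ'.erase C := by
      intro h
      exact hast (hsub _ (Finset.mem_of_mem_erase h) (Finset.mem_insert_self a C))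
    have hρex : ∃! D, D ∈ ρ ∧ a ∈ D := by
      refine ⟨insert a C, ⟨Finset.mem_insert_self _ _, Finset.mem_insert_self _ _⟩, ?_⟩
      rintro E ⟨hE, haE⟩
      rcases Finset.mem_insert.mp hE with rfl | hE
      · rfl
      · exact absurd (hsub E (Finset.mem_of_mem_erase hE) haE) hast
    have hblock : blockOfPt ρ a = insert a C :=
      blockOfPt_eq hρex (Finset.mem_insert_self _ _) (Finset.mem_insert_self _ _)
    have h1 : (blockOfPt ρ a).erase a = C := by
      rw [hblock, Finset.erase_insert haC]
    have h2 : ρ.erase (blockOfPt ρ a) = ρ'.erase C := by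
      rw [hblock, hρdef, Finset.erase_insert hins_notmem]
    have h3 : (insert C (ρ'.erase C)).erase ∅ = ρ' := by
      rcases Finset.mem_insert.mp hC with hCe | hCm
      · rw [hCe, Finset.erase_eq_of_notMem hnem, Finset.erase_insert hnem]
      · rw [Finset.insert_erase hCm, Finset.erase_eq_of_notMem hnem]
    have : (⟨(insert ((blockOfPt ρ a).erase a) (ρ.erase (blockOfPt ρ a))).erase ∅,
        (blockOfPt ρ a).erase a⟩ : (_ : Finset (Finset α)) × Finset α) = ⟨ρ', C⟩ := by
      rw [h1, h2, h3]
    exact this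
  · -- right inverse
    intro ρ hρ
    obtain ⟨⟨hsub, hnem, huniq⟩, hcond⟩ := mem_extSet.mp hρ
    have hauniv : a ∈ s ∪ insert a t := by simp
    have hex : ∃! D, D ∈ ρ ∧ a ∈ D := huniq a hauniv
    obtain ⟨hCam, haCa⟩ := blockOfPt_spec hex
    set Ca := blockOfPt ρ a with hCa
    set C := Ca.erase a with hCdef
    have h1 : insert a C = Ca := Finset.insert_erase haCa
    have hCnotmem : C ∉ ρ.erase Ca := by
      intro h
      have hCm : C ∈ ρ := Finset.mem_of_mem_erase h
      have hCne : C ≠ Ca := (Finset.mem_erase.mp h).1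
      have : C ≠ ∅ := fun he => hnem (he ▸ hCm)
      obtain ⟨x, hx⟩ := Finset.nonempty_iff_ne_empty.mpr this
      have hxCa : x ∈ Ca := Finset.mem_of_mem_erase (hCdef ▸ hx)
      exact hCne ((huniq x (hsub C hCm hx)).unique ⟨hCm, hx⟩ ⟨hCam, hxCa⟩)
    by_cases hC : C = ∅
    · have hρ'eq : (insert C (ρ.erase Ca)).erase ∅ = ρ.erase Ca := by
        rw [hC, Finset.erase_insert (fun h => hnem (Finset.mem_of_mem_erase h))]
      show insert (insert a ((blockOfPt ρ a).erase a))
          (((insert ((blockOfPt ρ a).erase a) (ρ.erase (blockOfPt ρ a))).erase ∅).erase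
            ((blockOfPt ρ a).erase a)) = ρ
      rw [← hCa, ← hCdef, hρ'eq, h1,
        Finset.erase_eq_of_notMem (hC ▸ fun h => hnem (Finset.mem_of_mem_erase h) : C ∉ ρ.erase Ca)]
      exact Finset.insert_erase hCam
    · have hnoem : (∅ : Finset α) ∉ insert C (ρ.erase Ca) := by
        intro h
        rcases Finset.mem_insert.mp h with h' | h'
        · exact hC h'.symm
        · exact hnem (Finset.mem_of_mem_erase h')
      have hρ'eq : (insert C (ρ.erase Ca)).erase ∅ = insert C (ρ.erase Ca) :=
        Finset.erase_eq_of_notMem hnoem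
      show insert (insert a ((blockOfPt ρ a).erase a))
          (((insert ((blockOfPt ρ a).erase a) (ρ.erase (blockOfPt ρ a))).erase ∅).erase
            ((blockOfPt ρ a).erase a)) = ρ
      rw [← hCa, ← hCdef, hρ'eq, Finset.erase_insert hCnotmem, h1]
      exact Finset.insert_erase hCam
  · -- function agreement
    rintro ⟨ρ', C⟩ _
    rfl

end Stage3

section Stage4
set_option linter.unusedSectionVars false

variable {α : Type*} [DecidableEq α] [Fintype α]

lemma extSet_empty {s : Finset α} {π : Finset (Finset α)} (hπ : IsPartOn s π) :
    extSet s (∅ : Finset α) π = {π} := by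
  ext ρ
  rw [mem_extSet]
  simp only [Finset.union_empty, Finset.mem_singleton]
  constructor
  · rintro ⟨hpart, hcond⟩
    have hsubπ : ρ ⊆ π := by
      intro C hC
      have hCs : C ∩ s = C := Finset.inter_eq_left.mpr (hpart.1 C hC)
      rcases hcond C hC with h | h
      · rwa [hCs] at h
      · rw [hCs] at h
        exact absurd (h ▸ hC) hpart.2.1
    apply Finset.Subset.antisymm hsubπ
    intro B hB
    have hBne : B.Nonempty := by
      rw [Finset.nonempty_iff_ne_empty]
      exact fun h => hπ.2.1 (h ▸ hB)
    obtain ⟨x, hx⟩ := hBne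
    have hxs : x ∈ s := hπ.1 B hB hx
    obtain ⟨C, hCm, hxC⟩ := hpart.exists_mem hxs
    have : C = B := hπ.mem_unique (hsubπ hCm) hB hxC hx
    exact this ▸ hCm
  · rintro rfl
    refine ⟨hπ, fun C hC => Or.inl ?_⟩
    rw [Finset.inter_eq_left.mpr (hπ.1 C hC)]
    exact hC

lemma Wrec_sum_step (σ γ : ℝ) (M j : ℕ) (g : ℕ → ℝ) :
    ∑ k ∈ Finset.range (M + 1),
      (g (j + k + 1) + ((M : ℝ) - k * σ - γ) * g (j + k)) * Wrec σ γ M k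
    = ∑ k ∈ Finset.range (M + 2), g (j + k) * Wrec σ γ (M + 1) k := by
  have hW0 : Wrec σ γ (M + 1) 0 = ((M : ℝ) - γ) * Wrec σ γ M 0 := rfl
  have hWs : ∀ k, Wrec σ γ (M + 1) (k + 1)
      = Wrec σ γ M k + ((M : ℝ) - (k + 1) * σ - γ) * Wrec σ γ M (k + 1) := fun k => rfl
  rw [Finset.sum_range_succ' (fun k => g (j + k) * Wrec σ γ (M + 1) k) (M + 1)]
  have expand : ∀ k ∈ Finset.range (M + 1),
      g (j + (k + 1)) * Wrec σ γ (M + 1) (k + 1)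
      = g (j + k + 1) * Wrec σ γ M k
        + g (j + k + 1) * (((M : ℝ) - (k + 1) * σ - γ) * Wrec σ γ M (k + 1)) := by
    intro k _
    rw [hWs k]
    rw [show j + (k + 1) = j + k + 1 from rfl]
    ring
  rw [Finset.sum_congr rfl expand, Finset.sum_add_distrib]
  have lhs_expand : ∀ k ∈ Finset.range (M + 1),
      (g (j + k + 1) + ((M : ℝ) - k * σ - γ) * g (j + k)) * Wrec σ γ M k
      = g (j + k + 1) * Wrec σ γ M k
        + ((M : ℝ) - k * σ - γ) * g (j + k) * Wrec σ γ M k := by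
    intro k _; ring
  rw [Finset.sum_congr rfl lhs_expand, Finset.sum_add_distrib, add_assoc]
  congr 1
  -- remaining:  ∑_{k<M+1} (M - kσ - γ) g(j+k) W M k
  --           = ∑_{k<M+1} g(j+k+1)((M-(k+1)σ-γ) W M (k+1)) + g(j+0) W (M+1) 0
  rw [Finset.sum_range_succ' (fun k => ((M : ℝ) - k * σ - γ) * g (j + k) * Wrec σ γ M k) M]
  rw [Finset.sum_range_succ (fun k => g (j + k + 1) * (((M : ℝ) - (k + 1) * σ - γ)
    * Wrec σ γ M (k + 1))) M]
  rw [Wrec_eq_zero_of_lt σ γ M (M + 1) (by omega)]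
  rw [hW0]
  simp only [Nat.cast_zero, zero_mul, mul_zero, add_zero, Nat.add_zero]
  congr 1
  · apply Finset.sum_congr rfl
    intro k _
    rw [show j + (k + 1) = j + k + 1 from rfl]
    push_cast
    ring
  · ring

lemma extSet_weight_sum (σ : ℝ) (t : Finset α) :
    ∀ {s : Finset α} {π : Finset (Finset α)} (g : ℕ → ℝ),
      IsPartOn s π → Disjoint s t →
      ∑ ρ ∈ extSet s t π, g ρ.card * ∏ C ∈ ρ, risingFac (1 - σ) (C.card - 1)
        = (∏ B ∈ π, risingFac (1 - σ) (B.card - 1)) *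
          ∑ k ∈ Finset.range (t.card + 1),
            g (π.card + k) * Wrec σ ((π.card : ℝ) * σ - (s.card : ℝ)) t.card k := by
  induction t using Finset.cons_induction with
  | empty =>
      intro s π g hπ _
      rw [extSet_empty hπ]
      simp [Wrec, mul_comm]
  | cons a t' hat ih =>
      intro s π g hπ hst
      have has : a ∉ s := fun h => (Finset.disjoint_left.mp hst) h (Finset.mem_cons_self a t')
      have hst' : Disjoint s t' :=
        hst.mono_right (by rw [Finset.cons_eq_insert]; exact Finset.subset_insert _ _)
      rw [Finset.cons_eq_insert,
        extSet_insert_sum hst' has hat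
          (fun ρ => g ρ.card * ∏ C ∈ ρ, risingFac (1 - σ) (C.card - 1))]
      have key : ∀ ρ' ∈ extSet s t' π,
          (g (insert {a} ρ').card * ∏ C ∈ insert {a} ρ', risingFac (1 - σ) (C.card - 1))
          + ∑ C ∈ ρ', (g (insert (insert a C) (ρ'.erase C)).card *
              ∏ D ∈ insert (insert a C) (ρ'.erase C), risingFac (1 - σ) (D.card - 1))
          = (g (ρ'.card + 1)
              + (((s.card : ℝ) + (t'.card : ℝ)) - (ρ'.card : ℝ) * σ) * g ρ'.card) *
            ∏ C ∈ ρ', risingFac (1 - σ) (C.card - 1) := by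
        intro ρ' hρ'
        obtain ⟨hpart, hcond⟩ := mem_extSet.mp hρ'
        have hasub : a ∉ s ∪ t' := by simp [has, hat]
        have hano : ∀ C ∈ ρ', a ∉ C := fun C hC h => hasub (hpart.1 C hC h)
        have hsing : {a} ∉ ρ' := fun h => hano {a} h (Finset.mem_singleton_self a)
        have h1 : (insert {a} ρ').card = ρ'.card + 1 := Finset.card_insert_of_notMem hsing
        have h2 : ∏ C ∈ insert {a} ρ', risingFac (1 - σ) (C.card - 1)
            = ∏ C ∈ ρ', risingFac (1 - σ) (C.card - 1) := by
          rw [Finset.prod_insert hsing]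
          simp [risingFac_zero]
        have key2 : ∀ C ∈ ρ',
            (g (insert (insert a C) (ρ'.erase C)).card *
              ∏ D ∈ insert (insert a C) (ρ'.erase C), risingFac (1 - σ) (D.card - 1))
            = ((C.card : ℝ) - σ) * g ρ'.card * ∏ D ∈ ρ', risingFac (1 - σ) (D.card - 1) := by
          intro C hC
          have hCne : C.Nonempty := Finset.nonempty_iff_ne_empty.mpr
            (fun h => hpart.2.1 (h ▸ hC))
          have haC : a ∉ C := hano C hC
          have hins_no : insert a C ∉ ρ'.erase C := fun h =>
            hano _ (Finset.mem_of_mem_erase h) (Finset.mem_insert_self a C)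
          have hcard : (insert (insert a C) (ρ'.erase C)).card = ρ'.card := by
            rw [Finset.card_insert_of_notMem hins_no, Finset.card_erase_of_mem hC,
              Nat.sub_add_cancel (Finset.card_pos.mpr ⟨C, hC⟩)]
          have hprod : ∏ D ∈ insert (insert a C) (ρ'.erase C), risingFac (1 - σ) (D.card - 1)
              = ((C.card : ℝ) - σ) * ∏ D ∈ ρ', risingFac (1 - σ) (D.card - 1) := by
            rw [Finset.prod_insert hins_no]
            have hins_card : (insert a C).card - 1 = C.card := by
              rw [Finset.card_insert_of_notMem haC]; omega
            have hC1 : C.card = (C.card - 1) + 1 := by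
              have := Finset.card_pos.mpr hCne; omega
            have : risingFac (1 - σ) ((insert a C).card - 1)
                = risingFac (1 - σ) (C.card - 1) * ((C.card : ℝ) - σ) := by
              rw [hins_card]
              conv_lhs => rw [hC1]
              rw [risingFac_succ]
              congr 1
              have h1C : (1 : ℕ) ≤ C.card := Finset.card_pos.mpr hCne
              push_cast [Nat.cast_sub h1C]
              ring
            rw [this, mul_assoc, ← Finset.mul_prod_erase ρ' _ hC]
            ring
          rw [hcard, hprod]
          ring
        have hsum2 : ∑ C ∈ ρ', ((C.card : ℝ) - σ)
            = ((s.card : ℝ) + (t'.card : ℝ)) - (ρ'.card : ℝ) * σ := by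
          rw [Finset.sum_sub_distrib, Finset.sum_const]
          have hcast : ∑ C ∈ ρ', ((C.card : ℝ)) = ((s ∪ t').card : ℝ) := by
            rw_mod_cast [hpart.sum_card]
          rw [hcast, Finset.card_union_of_disjoint hst']
          push_cast; ring
        rw [Finset.sum_congr rfl key2, h1, h2, ← Finset.sum_mul, ← Finset.sum_mul, hsum2]
        ring
      rw [Finset.sum_congr rfl key]
      rw [ih (fun c => g (c + 1)
          + (((s.card : ℝ) + (t'.card : ℝ)) - (c : ℝ) * σ) * g c) hπ hst']
      rw [Finset.card_insert_of_notMem hat]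
      congr 1
      have := Wrec_sum_step σ ((π.card : ℝ) * σ - (s.card : ℝ)) t'.card π.card g
      rw [← this]
      apply Finset.sum_congr rfl
      intro k _
      push_cast
      ring_nf
  
end Stage4

section Stage5
set_option linter.unusedSectionVars false

variable {α : Type*} [DecidableEq α] [Fintype α]

lemma isPartOn_empty : IsPartOn (∅ : Finset α) (∅ : Finset (Finset α)) := by
  refine ⟨by simp, by simp, by simp⟩

lemma parts_weight_sum (σ : ℝ) (u : Finset α) (j : ℕ) :
    ∑ π ∈ partsJOf u j, ∏ B ∈ π, risingFac (1 - σ) (B.card - 1)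
      = Wrec σ 0 u.card j := by
  have hset : partsJOf u j
      = (extSet (∅ : Finset α) u (∅ : Finset (Finset α))).filter (fun ρ => ρ.card = j) := by
    ext ρ
    simp only [partsJOf, Finset.mem_filter, Finset.mem_univ, true_and, mem_extSet,
      Finset.empty_union, Finset.inter_empty]
    constructor
    · rintro ⟨h1, h2⟩; exact ⟨⟨h1, fun C _ => by simp⟩, h2⟩
    · rintro ⟨⟨h1, -⟩, h2⟩; exact ⟨h1, h2⟩
  rw [hset, Finset.sum_filter]
  have : ∀ ρ ∈ extSet (∅ : Finset α) u (∅ : Finset (Finset α)),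
      (if ρ.card = j then ∏ B ∈ ρ, risingFac (1 - σ) (B.card - 1) else 0)
      = (if ρ.card = j then (1 : ℝ) else 0) * ∏ B ∈ ρ, risingFac (1 - σ) (B.card - 1) := by
    intro ρ _
    by_cases h : ρ.card = j <;> simp [h]
  rw [Finset.sum_congr rfl this,
    extSet_weight_sum σ u (fun c => if c = j then (1 : ℝ) else 0) isPartOn_empty
      (Finset.disjoint_empty_left u)]
  simp only [Finset.card_empty, Finset.prod_empty, one_mul, Nat.cast_zero, zero_mul, zero_sub,
    neg_zero, Nat.zero_add, zero_add, mul_zero]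
  rcases le_or_gt j u.card with hj | hj
  · rw [Finset.sum_eq_single j]
    · simp
    · intro k _ hk; simp [hk]
    · intro h; exact absurd (Finset.mem_range.mpr (by omega)) h
  · rw [Wrec_eq_zero_of_lt σ 0 u.card j hj]
    apply Finset.sum_eq_zero
    intro k hk
    have : k ≠ j := by rw [Finset.mem_range] at hk; omega
    simp [this]

lemma exists_partsJOf : ∀ (j : ℕ), 1 ≤ j → ∀ s : Finset α, j ≤ s.card →
    ∃ π : Finset (Finset α), IsPartOn s π ∧ π.card = j := by
  intro j
  induction j with
  | zero => omega
  | succ j ih =>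
      intro _ s hs
      by_cases hj : j = 0
      · subst hj
        refine ⟨{s}, ⟨by simp, ?_, ?_⟩, by simp⟩
        · simp only [Finset.mem_singleton]
          intro h
          rw [← h] at hs; simp at hs
        · intro a ha
          exact ⟨s, ⟨Finset.mem_singleton_self s, ha⟩, by rintro B ⟨hB, -⟩; simpa using hB⟩
      · have hcard : 2 ≤ s.card := by omega
        obtain ⟨x, hx⟩ : s.Nonempty := Finset.card_pos.mp (by omega)
        obtain ⟨π', hπ', hcard'⟩ := ih (by omega) (s.erase x)
          (by rw [Finset.card_erase_of_mem hx]; omega)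
        have hxne : {x} ∉ π' := by
          intro h
          have := hπ'.1 _ h (Finset.mem_singleton_self x)
          exact (Finset.mem_erase.mp this).1 rfl
        refine ⟨insert {x} π', ⟨?_, ?_, ?_⟩, by rw [Finset.card_insert_of_notMem hxne]; omega⟩
        · intro B hB
          rcases Finset.mem_insert.mp hB with rfl | hB
          · simpa using hx
          · exact (hπ'.1 B hB).trans (Finset.erase_subset x s)
        · intro h
          rcases Finset.mem_insert.mp h with h | h
          · exact absurd h.symm (Finset.singleton_ne_empty x)
          · exact hπ'.2.1 h
        · intro a ha
          by_cases hax : a = x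
          · refine ⟨{x}, ⟨Finset.mem_insert_self _ _, by simp [hax]⟩, ?_⟩
            rintro B ⟨hB, haB⟩
            rcases Finset.mem_insert.mp hB with rfl | hB
            · rfl
            · have := hπ'.1 B hB haB
              rw [Finset.mem_erase] at this
              exact absurd hax this.1
          · obtain ⟨B, ⟨hBm, haB⟩, hBu⟩ := hπ'.2.2 a (Finset.mem_erase.mpr ⟨hax, ha⟩)
            refine ⟨B, ⟨Finset.mem_insert_of_mem hBm, haB⟩, ?_⟩
            rintro E ⟨hE, haE⟩
            rcases Finset.mem_insert.mp hE with rfl | hE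
            · exact absurd (Finset.mem_singleton.mp haE) hax
            · exact hBu E ⟨hE, haE⟩

lemma restrict_isPartOn {u s : Finset α} {ρ : Finset (Finset α)}
    (hρ : IsPartOn u ρ) (hs : s ⊆ u) : IsPartOn s (restrictPart ρ s) := by
  refine ⟨?_, ?_, ?_⟩
  · intro B hB
    obtain ⟨-, hB⟩ := Finset.mem_erase.mp hB
    obtain ⟨C, -, rfl⟩ := Finset.mem_image.mp hB
    exact Finset.inter_subset_right
  · intro h
    exact (Finset.mem_erase.mp h).1 rfl
  · intro a ha
    obtain ⟨C, ⟨hCm, haC⟩, hCu⟩ := hρ.2.2 a (hs ha)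
    refine ⟨C ∩ s, ⟨?_, Finset.mem_inter.mpr ⟨haC, ha⟩⟩, ?_⟩
    · rw [restrictPart, Finset.mem_erase]
      exact ⟨Finset.nonempty_iff_ne_empty.mp ⟨a, Finset.mem_inter.mpr ⟨haC, ha⟩⟩,
        Finset.mem_image.mpr ⟨C, hCm, rfl⟩⟩
    · rintro B ⟨hBm, haB⟩
      obtain ⟨-, hBm⟩ := Finset.mem_erase.mp hBm
      obtain ⟨C', hC'm, rfl⟩ := Finset.mem_image.mp hBm
      rw [hCu C' ⟨hC'm, (Finset.mem_inter.mp haB).1⟩]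

lemma restrict_eq_iff {u s : Finset α} {ρ π : Finset (Finset α)}
    (hρ : IsPartOn u ρ) (hπ : IsPartOn s π) (hs : s ⊆ u) :
    restrictPart ρ s = π ↔ ∀ C ∈ ρ, C ∩ s ∈ π ∨ C ∩ s = ∅ := by
  constructor
  · rintro rfl C hC
    by_cases h : C ∩ s = ∅
    · exact Or.inr h
    · left
      rw [restrictPart, Finset.mem_erase]
      exact ⟨h, Finset.mem_image.mpr ⟨C, hC, rfl⟩⟩
  · intro hcond
    apply Finset.Subset.antisymm
    · intro B hB
      obtain ⟨hBne, hBm⟩ := Finset.mem_erase.mp hB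
      obtain ⟨C, hCm, rfl⟩ := Finset.mem_image.mp hBm
      rcases hcond C hCm with h | h
      · exact h
      · exact absurd h hBne
    · intro B hBm
      have hBne : B.Nonempty := Finset.nonempty_iff_ne_empty.mpr
        (fun h => hπ.2.1 (h ▸ hBm))
      obtain ⟨b, hb⟩ := hBne
      have hbs : b ∈ s := hπ.1 B hBm hb
      obtain ⟨C, hCm, hbC⟩ := hρ.exists_mem (hs hbs)
      have hCs : C ∩ s ∈ π := by
        rcases hcond C hCm with h | h
        · exact h
        · exact absurd (h ▸ Finset.mem_inter.mpr ⟨hbC, hbs⟩) (Finset.notMem_empty b)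
      have : C ∩ s = B := hπ.mem_unique hCs hBm (Finset.mem_inter.mpr ⟨hbC, hbs⟩) hb
      rw [restrictPart, Finset.mem_erase]
      exact ⟨this ▸ Finset.nonempty_iff_ne_empty.mp ⟨b, Finset.mem_inter.mpr ⟨hbC, hbs⟩⟩,
        Finset.mem_image.mpr ⟨C, hCm, this⟩⟩

end Stage5

section Stage6
set_option linter.unusedSectionVars false

variable {α : Type*} [DecidableEq α] [Fintype α]

/-- The unique block of `ρ` containing the set `B` (junk value if not unique). -/
def blockOfSet (ρ : Finset (Finset α)) (B : Finset α) : Finset α :=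
  if h : ∃! C, C ∈ ρ ∧ B ⊆ C then h.choose else ∅

lemma blockOfSet_spec {ρ : Finset (Finset α)} {B : Finset α} (h : ∃! C, C ∈ ρ ∧ B ⊆ C) :
    blockOfSet ρ B ∈ ρ ∧ B ⊆ blockOfSet ρ B := by
  rw [blockOfSet, dif_pos h]
  exact h.choose_spec.1

lemma blockOfSet_eq {ρ : Finset (Finset α)} {B : Finset α} (h : ∃! C, C ∈ ρ ∧ B ⊆ C)
    {C : Finset α} (hC : C ∈ ρ) (hBC : B ⊆ C) : blockOfSet ρ B = C := by
  rw [blockOfSet, dif_pos h]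
  exact (h.choose_spec.2 C ⟨hC, hBC⟩).symm ▸ rfl

lemma extSet_block_split {s t : Finset α} {π : Finset (Finset α)}
    (hπ : IsPartOn s π) (hst : Disjoint s t) {B : Finset α} (hB : B ∈ π) (l : ℕ)
    (F : Finset (Finset α) → ℝ) :
    ∑ ρ ∈ (extSet s t π).filter (fun ρ => ∃ C ∈ ρ, B ⊆ C ∧ (C \ s).card = l), F ρ
      = ∑ p ∈ (t.powersetCard l).sigma (fun L => extSet (s \ B) (t \ L) (π.erase B)),
          F (insert (B ∪ p.1) p.2) := by
  have hBne : B.Nonempty := Finset.nonempty_iff_ne_empty.mpr (fun h => hπ.2.1 (h ▸ hB))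
  obtain ⟨b, hb⟩ := hBne
  have hBs : B ⊆ s := hπ.1 B hB
  -- facts for elements of the filtered set
  have main : ∀ ρ, ρ ∈ extSet s t π → (∃ C ∈ ρ, B ⊆ C ∧ (C \ s).card = l) →
      (∃! C, C ∈ ρ ∧ B ⊆ C) := by
    intro ρ hρ hexx
    obtain ⟨C, hC, hBC, -⟩ := hexx
    obtain ⟨⟨hsub, hnem, huniq⟩, hcond⟩ := mem_extSet.mp hρ
    refine ⟨C, ⟨hC, hBC⟩, ?_⟩
    rintro C' ⟨hC', hBC'⟩
    exact (huniq b (Finset.mem_union_left t (hBs hb))).unique ⟨hC', hBC' hb⟩ ⟨hC, hBC hb⟩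
  refine Finset.sum_nbij'
    (i := fun ρ => (⟨(blockOfSet ρ B) \ s, ρ.erase (blockOfSet ρ B)⟩ :
        (_ : Finset α) × Finset (Finset α)))
    (j := fun p => insert (B ∪ p.1) p.2) ?_ ?_ ?_ ?_ ?_
  · -- forward membership
    intro ρ hρf
    obtain ⟨hρ, hexl⟩ := Finset.mem_filter.mp hρf
    obtain ⟨⟨hsub, hnem, huniq⟩, hcond⟩ := mem_extSet.mp hρ
    have hex := main ρ hρ hexl
    obtain ⟨hCBm, hBCB⟩ := blockOfSet_spec hex
    set CB := blockOfSet ρ B with hCBdef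
    obtain ⟨C, hC, hBC, hCl⟩ := hexl
    have hCeq : CB = C := hex.unique ⟨hCBm, hBCB⟩ ⟨hC, hBC⟩
    have hLl : (CB \ s).card = l := by rw [hCeq]; exact hCl
    have hCBinter : CB ∩ s = B := by
      have h1 : CB ∩ s ∈ π ∨ CB ∩ s = ∅ := hcond CB hCBm
      have hbCB : b ∈ CB ∩ s := Finset.mem_inter.mpr ⟨hBCB hb, hBs hb⟩
      rcases h1 with h | h
      · exact hπ.mem_unique h hB hbCB hb
      · exact absurd (h ▸ hbCB) (Finset.notMem_empty b)
    have hLt : CB \ s ⊆ t := by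
      intro x hx
      obtain ⟨hxCB, hxs⟩ := Finset.mem_sdiff.mp hx
      rcases Finset.mem_union.mp (hsub CB hCBm hxCB) with h | h
      · exact absurd h hxs
      · exact h
    have hdisj : ∀ D ∈ ρ.erase CB, ∀ x, x ∈ D → x ∉ CB := by
      intro D hD x hxD hxCB
      exact (Finset.mem_erase.mp hD).1
        (((huniq x (hsub D (Finset.mem_of_mem_erase hD) hxD)).unique
          ⟨Finset.mem_of_mem_erase hD, hxD⟩ ⟨hCBm, hxCB⟩))
    have hchar : ∀ x, x ∈ (s \ B) ∪ (t \ (CB \ s)) ↔ (x ∈ s ∪ t ∧ x ∉ CB) := by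
      intro x
      simp only [Finset.mem_union, Finset.mem_sdiff]
      constructor
      · rintro (⟨hxs, hxB⟩ | ⟨hxt, hxL⟩)
        · refine ⟨Or.inl hxs, fun hxCB => hxB ?_⟩
          rw [← hCBinter]; exact Finset.mem_inter.mpr ⟨hxCB, hxs⟩
        · refine ⟨Or.inr hxt, fun hxCB => hxL ⟨hxCB, fun hxs => ?_⟩⟩
          exact Finset.disjoint_left.mp hst hxs hxt
      · rintro ⟨hxu | hxu, hxCB⟩
        · exact Or.inl ⟨hxu, fun hxB => hxCB (hBCB hxB)⟩
        · refine Or.inr ⟨hxu, fun hxL => hxCB hxL.1⟩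
    rw [Finset.mem_sigma]
    constructor
    · exact Finset.mem_powersetCard.mpr ⟨hLt, hLl⟩
    · rw [mem_extSet]
      refine ⟨⟨?_, ?_, ?_⟩, ?_⟩
      · intro D hD x hxD
        exact (hchar x).mpr ⟨hsub D (Finset.mem_of_mem_erase hD) hxD, hdisj D hD x hxD⟩
      · exact fun h => hnem (Finset.mem_of_mem_erase h)
      · intro x hx
        obtain ⟨hxu, hxCB⟩ := (hchar x).mp hx
        obtain ⟨D, ⟨hDm, hxD⟩, hDu⟩ := huniq x hxu
        have hDne : D ≠ CB := fun h => hxCB (h ▸ hxD)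
        refine ⟨D, ⟨Finset.mem_erase.mpr ⟨hDne, hDm⟩, hxD⟩, ?_⟩
        rintro E ⟨hE, hxE⟩
        exact hDu E ⟨Finset.mem_of_mem_erase hE, hxE⟩
      · intro D hD
        have hDs : D ∩ (s \ B) = D ∩ s := by
          ext x
          simp only [Finset.mem_inter, Finset.mem_sdiff]
          constructor
          · rintro ⟨hxD, hxs, -⟩; exact ⟨hxD, hxs⟩
          · rintro ⟨hxD, hxs⟩
            exact ⟨hxD, hxs, fun hxB => hdisj D hD x hxD (hBCB hxB)⟩
        rw [hDs]
        rcases hcond D (Finset.mem_of_mem_erase hD) with h | h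
        · left
          rw [Finset.mem_erase]
          refine ⟨fun hDB => ?_, h⟩
          have : b ∈ D ∩ s := hDB ▸ hb
          exact hdisj D hD b (Finset.mem_inter.mp this).1 (hBCB hb)
        · exact Or.inr h
  · -- backward membership
    rintro ⟨L, ρ'⟩ hp
    rw [Finset.mem_sigma] at hp
    obtain ⟨hL, hρ'⟩ := hp
    dsimp only at hρ' ⊢
    obtain ⟨hLt, hLl⟩ := Finset.mem_powersetCard.mp hL
    obtain ⟨⟨hsub, hnem, huniq⟩, hcond⟩ := mem_extSet.mp hρ'
    have hBL_not : ∀ D ∈ ρ', ∀ x, x ∈ D → x ∉ B ∪ L := by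
      intro D hD x hxD hxBL
      rcases Finset.mem_union.mp (hsub D hD hxD) with h | h
      · obtain ⟨hxs, hxB⟩ := Finset.mem_sdiff.mp h
        rcases Finset.mem_union.mp hxBL with h' | h'
        · exact hxB h'
        · exact Finset.disjoint_left.mp hst hxs (hLt h')
      · obtain ⟨hxt, hxL⟩ := Finset.mem_sdiff.mp h
        rcases Finset.mem_union.mp hxBL with h' | h'
        · exact Finset.disjoint_left.mp hst (hBs h') hxt
        · exact hxL h'
    have hBLne : (B ∪ L).Nonempty := ⟨b, Finset.mem_union_left L hb⟩
    have hBLs : B ∪ L ⊆ s ∪ t := Finset.union_subset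
      (hBs.trans Finset.subset_union_left) (hLt.trans Finset.subset_union_right)
    rw [Finset.mem_filter]
    constructor
    · rw [mem_extSet]
      refine ⟨⟨?_, ?_, ?_⟩, ?_⟩
      · intro D hD
        rcases Finset.mem_insert.mp hD with rfl | hD
        · exact hBLs
        · refine (hsub D hD).trans ?_
          intro x hx
          rcases Finset.mem_union.mp hx with h | h
          · exact Finset.mem_union_left t (Finset.mem_sdiff.mp h).1
          · exact Finset.mem_union_right s (Finset.mem_sdiff.mp h).1
      · intro h
        rcases Finset.mem_insert.mp h with h | h
        · exact Finset.nonempty_iff_ne_empty.mp hBLne h.symm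
        · exact hnem h
      · intro x hx
        by_cases hxBL : x ∈ B ∪ L
        · refine ⟨B ∪ L, ⟨Finset.mem_insert_self _ _, hxBL⟩, ?_⟩
          rintro E ⟨hE, hxE⟩
          rcases Finset.mem_insert.mp hE with rfl | hE
          · rfl
          · exact absurd hxBL (hBL_not E hE x hxE)
        · have hx' : x ∈ (s \ B) ∪ (t \ L) := by
            rcases Finset.mem_union.mp hx with h | h
            · exact Finset.mem_union_left _ (Finset.mem_sdiff.mpr
                ⟨h, fun hB' => hxBL (Finset.mem_union_left L hB')⟩)
            · exact Finset.mem_union_right _ (Finset.mem_sdiff.mpr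
                ⟨h, fun hL' => hxBL (Finset.mem_union_right B hL')⟩)
          obtain ⟨D, ⟨hDm, hxD⟩, hDu⟩ := huniq x hx'
          refine ⟨D, ⟨Finset.mem_insert_of_mem hDm, hxD⟩, ?_⟩
          rintro E ⟨hE, hxE⟩
          rcases Finset.mem_insert.mp hE with rfl | hE
          · exact absurd hxE hxBL
          · exact hDu E ⟨hE, hxE⟩
      · intro D hD
        rcases Finset.mem_insert.mp hD with rfl | hD
        · left
          have : (B ∪ L) ∩ s = B := by
            ext x
            simp only [Finset.mem_inter, Finset.mem_union]
            constructor
            · rintro ⟨hxB | hxL, hxs⟩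
              · exact hxB
              · exact absurd hxs (fun h => Finset.disjoint_left.mp hst h (hLt hxL))
            · intro hxB; exact ⟨Or.inl hxB, hBs hxB⟩
          rw [this]; exact hB
        · have hDs : D ∩ s = D ∩ (s \ B) := by
            ext x
            simp only [Finset.mem_inter, Finset.mem_sdiff]
            constructor
            · rintro ⟨hxD, hxs⟩
              exact ⟨hxD, hxs, fun hxB => hBL_not D hD x hxD (Finset.mem_union_left L hxB)⟩
            · rintro ⟨hxD, hxs, -⟩; exact ⟨hxD, hxs⟩
          rw [hDs]
          rcases hcond D hD with h | h
          · exact Or.inl (Finset.mem_of_mem_erase h)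
          · exact Or.inr h
    · refine ⟨B ∪ L, Finset.mem_insert_self _ _, Finset.subset_union_left, ?_⟩
      have : (B ∪ L) \ s = L := by
        ext x
        simp only [Finset.mem_sdiff, Finset.mem_union]
        constructor
        · rintro ⟨hxB | hxL, hxs⟩
          · exact absurd (hBs hxB) hxs
          · exact hxL
        · intro hxL
          exact ⟨Or.inr hxL, fun hxs => Finset.disjoint_left.mp hst hxs (hLt hxL)⟩
      rw [this]; exact hLl
  · -- left inverse
    intro ρ hρf
    obtain ⟨hρ, hexl⟩ := Finset.mem_filter.mp hρf
    obtain ⟨⟨hsub, hnem, huniq⟩, hcond⟩ := mem_extSet.mp hρ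
    have hex := main ρ hρ hexl
    obtain ⟨hCBm, hBCB⟩ := blockOfSet_spec hex
    set CB := blockOfSet ρ B with hCBdef
    have hCBinter : CB ∩ s = B := by
      have h1 : CB ∩ s ∈ π ∨ CB ∩ s = ∅ := hcond CB hCBm
      have hbCB : b ∈ CB ∩ s := Finset.mem_inter.mpr ⟨hBCB hb, hBs hb⟩
      rcases h1 with h | h
      · exact hπ.mem_unique h hB hbCB hb
      · exact absurd (h ▸ hbCB) (Finset.notMem_empty b)
    have hCBtop : B ∪ (CB \ s) = CB := by
      ext x
      simp only [Finset.mem_union, Finset.mem_sdiff]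
      constructor
      · rintro (hxB | ⟨hxCB, -⟩)
        · exact hBCB hxB
        · exact hxCB
      · intro hxCB
        by_cases hxs : x ∈ s
        · exact Or.inl (hCBinter ▸ Finset.mem_inter.mpr ⟨hxCB, hxs⟩)
        · exact Or.inr ⟨hxCB, hxs⟩
    show insert (B ∪ (CB \ s)) (ρ.erase CB) = ρ
    rw [hCBtop]
    exact Finset.insert_erase hCBm
  · -- right inverse
    rintro ⟨L, ρ'⟩ hp
    rw [Finset.mem_sigma] at hp
    obtain ⟨hL, hρ'⟩ := hp
    dsimp only at hρ' ⊢
    obtain ⟨hLt, hLl⟩ := Finset.mem_powersetCard.mp hL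
    obtain ⟨⟨hsub, hnem, huniq⟩, hcond⟩ := mem_extSet.mp hρ'
    have hBL_not : ∀ D ∈ ρ', ∀ x, x ∈ D → x ∉ B ∪ L := by
      intro D hD x hxD hxBL
      rcases Finset.mem_union.mp (hsub D hD hxD) with h | h
      · obtain ⟨hxs, hxB⟩ := Finset.mem_sdiff.mp h
        rcases Finset.mem_union.mp hxBL with h' | h'
        · exact hxB h'
        · exact Finset.disjoint_left.mp hst hxs (hLt h')
      · obtain ⟨hxt, hxL⟩ := Finset.mem_sdiff.mp h
        rcases Finset.mem_union.mp hxBL with h' | h'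
        · exact Finset.disjoint_left.mp hst (hBs h') hxt
        · exact hxL h'
    set ρ := insert (B ∪ L) ρ' with hρdef
    have hBLmem : B ∪ L ∈ ρ := Finset.mem_insert_self _ _
    have hex : ∃! C, C ∈ ρ ∧ B ⊆ C := by
      refine ⟨B ∪ L, ⟨hBLmem, Finset.subset_union_left⟩, ?_⟩
      rintro C' ⟨hC', hBC'⟩
      rcases Finset.mem_insert.mp hC' with rfl | hC'
      · rfl
      · exact absurd (Finset.mem_union_left L hb) (hBL_not C' hC' b (hBC' hb))
    have hblock : blockOfSet ρ B = B ∪ L :=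
      blockOfSet_eq hex hBLmem Finset.subset_union_left
    have h1 : (blockOfSet ρ B) \ s = L := by
      rw [hblock]
      ext x
      simp only [Finset.mem_sdiff, Finset.mem_union]
      constructor
      · rintro ⟨hxB | hxL, hxs⟩
        · exact absurd (hBs hxB) hxs
        · exact hxL
      · intro hxL
        exact ⟨Or.inr hxL, fun hxs => Finset.disjoint_left.mp hst hxs (hLt hxL)⟩
    have h2 : ρ.erase (blockOfSet ρ B) = ρ' := by
      rw [hblock, hρdef]
      apply Finset.erase_insert
      intro h
      exact hBL_not (B ∪ L) h b (Finset.mem_union_left L hb) (Finset.mem_union_left L hb)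
    have : (⟨(blockOfSet ρ B) \ s, ρ.erase (blockOfSet ρ B)⟩ :
        (_ : Finset α) × Finset (Finset α)) = ⟨L, ρ'⟩ := by
      rw [h1, h2]
    exact this
  · -- function agreement
    intro ρ hρf
    obtain ⟨hρ, hexl⟩ := Finset.mem_filter.mp hρf
    obtain ⟨⟨hsub, hnem, huniq⟩, hcond⟩ := mem_extSet.mp hρ
    have hex := main ρ hρ hexl
    obtain ⟨hCBm, hBCB⟩ := blockOfSet_spec hex
    set CB := blockOfSet ρ B with hCBdef
    have hCBinter : CB ∩ s = B := by
      have h1 : CB ∩ s ∈ π ∨ CB ∩ s = ∅ := hcond CB hCBm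
      have hbCB : b ∈ CB ∩ s := Finset.mem_inter.mpr ⟨hBCB hb, hBs hb⟩
      rcases h1 with h | h
      · exact hπ.mem_unique h hB hbCB hb
      · exact absurd (h ▸ hbCB) (Finset.notMem_empty b)
    have hCBtop : B ∪ (CB \ s) = CB := by
      ext x
      simp only [Finset.mem_union, Finset.mem_sdiff]
      constructor
      · rintro (hxB | ⟨hxCB, -⟩)
        · exact hBCB hxB
        · exact hxCB
      · intro hxCB
        by_cases hxs : x ∈ s
        · exact Or.inl (hCBinter ▸ Finset.mem_inter.mpr ⟨hxCB, hxs⟩)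
        · exact Or.inr ⟨hxCB, hxs⟩
    show F ρ = F (insert (B ∪ (CB \ s)) (ρ.erase CB))
    rw [hCBtop, Finset.insert_erase hCBm]

end Stage6

section Stage7
set_option linter.unusedSectionVars false

variable {α : Type*} [DecidableEq α] [Fintype α]

lemma mem_partsJOf {s : Finset α} {j : ℕ} {π : Finset (Finset α)} :
    π ∈ partsJOf s j ↔ IsPartOn s π ∧ π.card = j := by
  simp [partsJOf]

lemma IsPartOn.erase_block {s : Finset α} {π : Finset (Finset α)} (hπ : IsPartOn s π)
    {B : Finset α} (hB : B ∈ π) : IsPartOn (s \ B) (π.erase B) := by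
  have hdisj : ∀ D ∈ π.erase B, ∀ x, x ∈ D → x ∉ B := by
    intro D hD x hxD hxB
    exact (Finset.mem_erase.mp hD).1
      (hπ.mem_unique (Finset.mem_of_mem_erase hD) hB hxD hxB)
  refine ⟨?_, ?_, ?_⟩
  · intro D hD x hxD
    exact Finset.mem_sdiff.mpr ⟨hπ.1 D (Finset.mem_of_mem_erase hD) hxD, hdisj D hD x hxD⟩
  · exact fun h => hπ.2.1 (Finset.mem_of_mem_erase h)
  · intro x hx
    obtain ⟨hxs, hxB⟩ := Finset.mem_sdiff.mp hx
    obtain ⟨D, ⟨hDm, hxD⟩, hDu⟩ := hπ.2.2 x hxs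
    have hDB : D ≠ B := fun h => hxB (h ▸ hxD)
    refine ⟨D, ⟨Finset.mem_erase.mpr ⟨hDB, hDm⟩, hxD⟩, ?_⟩
    rintro E ⟨hE, hxE⟩
    exact hDu E ⟨Finset.mem_of_mem_erase hE, hxE⟩

lemma parts_block_sum (j : ℕ) (hj : 1 ≤ j) (s : Finset α)
    (Φ : Finset α → Finset (Finset α) → ℝ) :
    ∑ π ∈ partsJOf s j, ∑ B ∈ π, Φ B (π.erase B)
      = ∑ p ∈ (s.powerset.filter (fun B => B.Nonempty)).sigma
          (fun B => partsJOf (s \ B) (j - 1)), Φ p.1 p.2 := by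
  rw [Finset.sum_sigma']
  refine Finset.sum_nbij'
    (i := fun p => (⟨p.2, p.1.erase p.2⟩ : (_ : Finset α) × Finset (Finset α)))
    (j := fun q => (⟨insert q.1 q.2, q.1⟩ : (_ : Finset (Finset α)) × Finset α))
    ?_ ?_ ?_ ?_ ?_
  · rintro ⟨π, B⟩ hp
    rw [Finset.mem_sigma] at hp
    obtain ⟨hπm, hBm⟩ := hp
    dsimp only at hBm ⊢
    obtain ⟨hπ, hcard⟩ := mem_partsJOf.mp hπm
    rw [Finset.mem_sigma]
    constructor
    · rw [Finset.mem_filter, Finset.mem_powerset]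
      exact ⟨hπ.1 B hBm, Finset.nonempty_iff_ne_empty.mpr (fun h => hπ.2.1 (h ▸ hBm))⟩
    · rw [mem_partsJOf]
      exact ⟨hπ.erase_block hBm, by rw [Finset.card_erase_of_mem hBm, hcard]⟩
  · rintro ⟨B, π''⟩ hq
    rw [Finset.mem_sigma] at hq
    obtain ⟨hBm, hπ''m⟩ := hq
    dsimp only at hπ''m ⊢
    rw [Finset.mem_filter, Finset.mem_powerset] at hBm
    obtain ⟨hBs, hBne⟩ := hBm
    obtain ⟨hπ'', hcard''⟩ := mem_partsJOf.mp hπ''m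
    obtain ⟨b, hb⟩ := hBne
    have hBnotin : B ∉ π'' := by
      intro h
      exact (Finset.mem_sdiff.mp (hπ''.1 B h hb)).2 hb
    rw [Finset.mem_sigma]
    constructor
    · rw [mem_partsJOf]
      refine ⟨⟨?_, ?_, ?_⟩, ?_⟩
      · intro D hD
        rcases Finset.mem_insert.mp hD with rfl | hD
        · exact hBs
        · exact (hπ''.1 D hD).trans (Finset.sdiff_subset)
      · intro h
        rcases Finset.mem_insert.mp h with h | h
        · exact absurd h.symm (Finset.nonempty_iff_ne_empty.mp ⟨b, hb⟩)
        · exact hπ''.2.1 h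
      · intro x hx
        by_cases hxB : x ∈ B
        · refine ⟨B, ⟨Finset.mem_insert_self _ _, hxB⟩, ?_⟩
          rintro E ⟨hE, hxE⟩
          rcases Finset.mem_insert.mp hE with rfl | hE
          · rfl
          · exact absurd hxB (Finset.mem_sdiff.mp (hπ''.1 E hE hxE)).2
        · obtain ⟨D, ⟨hDm, hxD⟩, hDu⟩ := hπ''.2.2 x (Finset.mem_sdiff.mpr ⟨hx, hxB⟩)
          refine ⟨D, ⟨Finset.mem_insert_of_mem hDm, hxD⟩, ?_⟩
          rintro E ⟨hE, hxE⟩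
          rcases Finset.mem_insert.mp hE with rfl | hE
          · exact absurd hxE hxB
          · exact hDu E ⟨hE, hxE⟩
      · rw [Finset.card_insert_of_notMem hBnotin, hcard'']
        omega
    · exact Finset.mem_insert_self _ _
  · rintro ⟨π, B⟩ hp
    rw [Finset.mem_sigma] at hp
    obtain ⟨hπm, hBm⟩ := hp
    dsimp only at hBm ⊢
    have : (⟨insert B (π.erase B), B⟩ : (_ : Finset (Finset α)) × Finset α) = ⟨π, B⟩ := by
      rw [Finset.insert_erase hBm]
    exact this
  · rintro ⟨B, π''⟩ hq
    rw [Finset.mem_sigma] at hq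
    obtain ⟨hBm, hπ''m⟩ := hq
    dsimp only at hπ''m ⊢
    rw [Finset.mem_filter, Finset.mem_powerset] at hBm
    obtain ⟨hBs, hBne⟩ := hBm
    obtain ⟨hπ'', hcard''⟩ := mem_partsJOf.mp hπ''m
    obtain ⟨b, hb⟩ := hBne
    have hBnotin : B ∉ π'' := by
      intro h
      exact (Finset.mem_sdiff.mp (hπ''.1 B h hb)).2 hb
    have : (⟨B, (insert B π'').erase B⟩ : (_ : Finset α) × Finset (Finset α))
        = ⟨B, π''⟩ := by
      rw [Finset.erase_insert hBnotin]
    exact this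
  · rintro ⟨π, B⟩ _
    rfl

lemma sum_powerset_nonempty (s : Finset α) (f : Finset α → ℝ) :
    ∑ B ∈ s.powerset.filter (fun B => B.Nonempty), f B
      = ∑ i ∈ Finset.Icc 1 s.card, ∑ B ∈ s.powersetCard i, f B := by
  rw [← Finset.sum_fiberwise_of_maps_to (g := Finset.card)
    (t := Finset.Icc 1 s.card) ?_ f]
  · apply Finset.sum_congr rfl
    intro i hi
    rw [Finset.mem_Icc] at hi
    apply Finset.sum_congr
    · ext B
      simp only [Finset.mem_filter, Finset.mem_powerset, Finset.mem_powersetCard]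
      constructor
      · rintro ⟨⟨h1, -⟩, h2⟩; exact ⟨h1, h2⟩
      · rintro ⟨h1, h2⟩
        exact ⟨⟨h1, Finset.card_pos.mp (by omega)⟩, h2⟩
    · intro _ _; rfl
  · intro B hB
    rw [Finset.mem_filter, Finset.mem_powerset] at hB
    rw [Finset.mem_Icc]
    exact ⟨Finset.card_pos.mpr hB.2, Finset.card_le_card hB.1⟩

end Stage7

section Stage8
set_option linter.unusedSectionVars false

variable {α : Type*} [DecidableEq α] [Fintype α]

lemma numerator_eval (σ : ℝ) (VN : ℕ → ℝ) (su tu : Finset α)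
    (hdisj : Disjoint su tu) (j l : ℕ) (hj : 1 ≤ j) :
    ∑ π ∈ partsJOf su j, ∑ ρ ∈ extSet su tu π,
      (∑ B ∈ π, if (∃ C ∈ ρ, B ⊆ C ∧ (C \ su).card = l) then (1:ℝ) else 0) *
        (VN ρ.card * ∏ C ∈ ρ, risingFac (1 - σ) (C.card - 1))
    = ∑ i ∈ Finset.Icc 1 su.card, (su.card.choose i : ℝ) *
        ((tu.card.choose l : ℝ) * (risingFac (1 - σ) (i + l - 1) *
          (Wrec σ 0 (su.card - i) (j - 1) *
            ∑ k ∈ Finset.range (tu.card - l + 1),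
              VN (j + k) *
                Wrec σ (((j : ℝ) - 1) * σ - ((su.card : ℝ) - (i : ℝ))) (tu.card - l) k))) := by
  have stepπ : ∀ π ∈ partsJOf su j,
      ∑ ρ ∈ extSet su tu π,
        (∑ B ∈ π, if (∃ C ∈ ρ, B ⊆ C ∧ (C \ su).card = l) then (1:ℝ) else 0) *
          (VN ρ.card * ∏ C ∈ ρ, risingFac (1 - σ) (C.card - 1))
      = ∑ B ∈ π, ((tu.card.choose l : ℝ) *
          ((∏ B' ∈ π.erase B, risingFac (1 - σ) (B'.card - 1)) *
            ∑ k ∈ Finset.range (tu.card - l + 1),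
              (VN (j - 1 + k + 1) * risingFac (1 - σ) (B.card + l - 1)) *
                Wrec σ (((j - 1 : ℕ) : ℝ) * σ - ((su.card - B.card : ℕ) : ℝ))
                  (tu.card - l) k)) := by
    intro π hπm
    obtain ⟨hπ, hπcard⟩ := mem_partsJOf.mp hπm
    -- distribute and swap
    have h1 : ∀ ρ ∈ extSet su tu π,
        (∑ B ∈ π, if (∃ C ∈ ρ, B ⊆ C ∧ (C \ su).card = l) then (1:ℝ) else 0) *
          (VN ρ.card * ∏ C ∈ ρ, risingFac (1 - σ) (C.card - 1))
        = ∑ B ∈ π, (if (∃ C ∈ ρ, B ⊆ C ∧ (C \ su).card = l) then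
            (VN ρ.card * ∏ C ∈ ρ, risingFac (1 - σ) (C.card - 1)) else 0) := by
      intro ρ _
      rw [Finset.sum_mul]
      apply Finset.sum_congr rfl
      intro B _
      rw [boole_mul]
    rw [Finset.sum_congr rfl h1, Finset.sum_comm]
    apply Finset.sum_congr rfl
    intro B hB
    have hBsu : B ⊆ su := hπ.1 B hB
    rw [← Finset.sum_filter, extSet_block_split hπ hdisj hB l
      (fun ρ => VN ρ.card * ∏ C ∈ ρ, risingFac (1 - σ) (C.card - 1)),
      Finset.sum_sigma]
    have hπ'' : IsPartOn (su \ B) (π.erase B) := hπ.erase_block hB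
    have hcard2 : (π.erase B).card = j - 1 := by
      rw [Finset.card_erase_of_mem hB, hπcard]
    have hcard3 : (su \ B).card = su.card - B.card := Finset.card_sdiff_of_subset hBsu
    have hL : ∀ L ∈ tu.powersetCard l,
        ∑ ρ' ∈ extSet (su \ B) (tu \ L) (π.erase B),
          (VN (insert (B ∪ L) ρ').card *
            ∏ C ∈ insert (B ∪ L) ρ', risingFac (1 - σ) (C.card - 1))
        = (∏ B' ∈ π.erase B, risingFac (1 - σ) (B'.card - 1)) *
            ∑ k ∈ Finset.range (tu.card - l + 1),
              (VN (j - 1 + k + 1) * risingFac (1 - σ) (B.card + l - 1)) *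
                Wrec σ (((j - 1 : ℕ) : ℝ) * σ - ((su.card - B.card : ℕ) : ℝ))
                  (tu.card - l) k := by
      intro L hLm
      obtain ⟨hLt, hLl⟩ := Finset.mem_powersetCard.mp hLm
      have hdisj'' : Disjoint (su \ B) (tu \ L) :=
        hdisj.mono Finset.sdiff_subset Finset.sdiff_subset
      have hcard1 : (tu \ L).card = tu.card - l := by
        rw [Finset.card_sdiff_of_subset hLt, hLl]
      have hBLdisj : Disjoint B L := hdisj.mono hBsu hLt
      have hBne : B.Nonempty := Finset.nonempty_iff_ne_empty.mpr
        (fun h => hπ.2.1 (h ▸ hB))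
      obtain ⟨b, hb⟩ := hBne
      have hsummand : ∀ ρ' ∈ extSet (su \ B) (tu \ L) (π.erase B),
          (VN (insert (B ∪ L) ρ').card *
            ∏ C ∈ insert (B ∪ L) ρ', risingFac (1 - σ) (C.card - 1))
          = (fun c => VN (c + 1) * risingFac (1 - σ) (B.card + l - 1)) ρ'.card *
              ∏ C ∈ ρ', risingFac (1 - σ) (C.card - 1) := by
        intro ρ' hρ'
        obtain ⟨⟨hsub, hnem, huniq⟩, -⟩ := mem_extSet.mp hρ'
        have hBLnot : B ∪ L ∉ ρ' := by
          intro h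
          have := hsub _ h (Finset.mem_union_left L hb)
          rcases Finset.mem_union.mp this with h' | h'
          · exact (Finset.mem_sdiff.mp h').2 hb
          · exact Finset.disjoint_left.mp hdisj (hBsu hb) (Finset.mem_sdiff.mp h').1
        have hcardins : (insert (B ∪ L) ρ').card = ρ'.card + 1 :=
          Finset.card_insert_of_notMem hBLnot
        have hBLcard : (B ∪ L).card = B.card + l := by
          rw [Finset.card_union_of_disjoint hBLdisj, hLl]
        rw [hcardins, Finset.prod_insert hBLnot, hBLcard]
        dsimp only
        ring
      rw [Finset.sum_congr rfl hsummand,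
        extSet_weight_sum σ (tu \ L)
          (fun c => VN (c + 1) * risingFac (1 - σ) (B.card + l - 1)) hπ'' hdisj'',
        hcard1, hcard2, hcard3]
    rw [Finset.sum_congr rfl hL, Finset.sum_const, Finset.card_powersetCard, nsmul_eq_mul]
  rw [Finset.sum_congr rfl stepπ]
  rw [parts_block_sum j hj su
    (fun B π'' => (tu.card.choose l : ℝ) *
      ((∏ B' ∈ π'', risingFac (1 - σ) (B'.card - 1)) *
        ∑ k ∈ Finset.range (tu.card - l + 1),
          (VN (j - 1 + k + 1) * risingFac (1 - σ) (B.card + l - 1)) *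
            Wrec σ (((j - 1 : ℕ) : ℝ) * σ - ((su.card - B.card : ℕ) : ℝ))
              (tu.card - l) k))]
  rw [Finset.sum_sigma]
  have stepB : ∀ B ∈ su.powerset.filter (fun B => B.Nonempty),
      ∑ π'' ∈ partsJOf (su \ B) (j - 1),
        (tu.card.choose l : ℝ) *
          ((∏ B' ∈ π'', risingFac (1 - σ) (B'.card - 1)) *
            ∑ k ∈ Finset.range (tu.card - l + 1),
              (VN (j - 1 + k + 1) * risingFac (1 - σ) (B.card + l - 1)) *
                Wrec σ (((j - 1 : ℕ) : ℝ) * σ - ((su.card - B.card : ℕ) : ℝ))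
                  (tu.card - l) k)
      = (tu.card.choose l : ℝ) *
          (Wrec σ 0 (su.card - B.card) (j - 1) *
            ∑ k ∈ Finset.range (tu.card - l + 1),
              (VN (j - 1 + k + 1) * risingFac (1 - σ) (B.card + l - 1)) *
                Wrec σ (((j - 1 : ℕ) : ℝ) * σ - ((su.card - B.card : ℕ) : ℝ))
                  (tu.card - l) k) := by
    intro B hBm
    rw [Finset.mem_filter, Finset.mem_powerset] at hBm
    rw [← Finset.mul_sum, ← Finset.sum_mul, parts_weight_sum σ (su \ B) (j - 1),
      Finset.card_sdiff_of_subset hBm.1]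
  rw [Finset.sum_congr rfl stepB, sum_powerset_nonempty]
  apply Finset.sum_congr rfl
  intro i hi
  rw [Finset.mem_Icc] at hi
  have stepc : ∀ B ∈ su.powersetCard i, (tu.card.choose l : ℝ) *
      (Wrec σ 0 (su.card - B.card) (j - 1) *
        ∑ k ∈ Finset.range (tu.card - l + 1),
          (VN (j - 1 + k + 1) * risingFac (1 - σ) (B.card + l - 1)) *
            Wrec σ (((j - 1 : ℕ) : ℝ) * σ - ((su.card - B.card : ℕ) : ℝ))
              (tu.card - l) k)
      = (tu.card.choose l : ℝ) * (risingFac (1 - σ) (i + l - 1) *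
          (Wrec σ 0 (su.card - i) (j - 1) *
            ∑ k ∈ Finset.range (tu.card - l + 1),
              VN (j + k) *
                Wrec σ (((j : ℝ) - 1) * σ - ((su.card : ℝ) - (i : ℝ))) (tu.card - l) k)) := by
    intro B hBm
    obtain ⟨hBsu, hBcard⟩ := Finset.mem_powersetCard.mp hBm
    rw [hBcard]
    have hγ : (((j - 1 : ℕ) : ℝ) * σ - ((su.card - i : ℕ) : ℝ))
        = (((j : ℝ) - 1) * σ - ((su.card : ℝ) - (i : ℝ))) := by
      rw [Nat.cast_sub hj, Nat.cast_sub hi.2]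
      push_cast
      ring
    have hsum : ∀ k ∈ Finset.range (tu.card - l + 1),
        (VN (j - 1 + k + 1) * risingFac (1 - σ) (i + l - 1)) *
          Wrec σ (((j - 1 : ℕ) : ℝ) * σ - ((su.card - i : ℕ) : ℝ)) (tu.card - l) k
        = risingFac (1 - σ) (i + l - 1) * (VN (j + k) *
            Wrec σ (((j : ℝ) - 1) * σ - ((su.card : ℝ) - (i : ℝ))) (tu.card - l) k) := by
      intro k _
      rw [hγ]
      have : j - 1 + k + 1 = j + k := by omega
      rw [this]
      ring
    rw [Finset.sum_congr rfl hsum, ← Finset.mul_sum]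
    ring
  rw [Finset.sum_congr rfl stepc, Finset.sum_const, Finset.card_powersetCard, nsmul_eq_mul]

end Stage8

section Stage9
set_option linter.unusedSectionVars false
set_option maxHeartbeats 1000000

lemma card_oldSet (n m : ℕ) : (oldSet n m).card = n := by
  have h : ∀ i ∈ Finset.range n, i < n + m := fun i hi =>
    lt_of_lt_of_le (Finset.mem_range.mp hi) (Nat.le_add_right n m)
  have : oldSet n m = (Finset.range n).attachFin h := by
    ext x
    simp [oldSet, Finset.mem_attachFin, Finset.mem_range]
  rw [this, Finset.card_attachFin, Finset.card_range]

lemma risingFac_zero_left {N : ℕ} (hN : 1 ≤ N) : risingFac 0 N = 0 := by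
  rw [risingFac]
  apply Finset.prod_eq_zero (Finset.mem_range.mpr (show 0 < N by omega))
  simp

lemma cgfc_one {N : ℕ} (hN : 1 ≤ N) (τ : ℝ) : cgfc N 1 τ = - risingFac (-τ) N := by
  rw [cgfc, gfc]
  rw [Finset.sum_range_succ, Finset.sum_range_one]
  have h0 : (-(0 : ℕ) : ℝ) * τ - 0 = 0 := by push_cast; ring
  have h1 : (-(1 : ℕ) : ℝ) * τ - 0 = -τ := by push_cast; ring
  rw [h0, h1, risingFac_zero_left hN]
  simp [Nat.factorial]

lemma cgfc_Wrec (N k : ℕ) (σ : ℝ) : cgfc N k σ = σ ^ k * Wrec σ 0 N k := gfc_eq_Wrec N k σ 0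

end Stage9

/-- expected number of old species re-observed with frequency `l`,
given only the number of blocks. -/
theorem looking_backward_freq_estimator_incomplete
    (n m j : ℕ) (hn : 1 ≤ n) (hm : 1 ≤ m) (hj1 : 1 ≤ j) (hjn : j ≤ n)
    (σ : ℝ) (hσ1 : σ < 1) (hσ0 : σ ≠ 0)
    (V : ℕ → ℕ → ℝ) (hV11 : V 1 1 = 1)
    (hVnn : ∀ N k, 1 ≤ k → k ≤ N → 0 ≤ V N k)
    (hVrec : ∀ N k, 1 ≤ k → k ≤ N →
      V N k = V (N + 1) (k + 1) + ((N : ℝ) - (k : ℝ) * σ) * V (N + 1) k)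
    (hVnj : 0 < V n j)
    (l : ℕ) (hl1 : 1 ≤ l) (hlm : l ≤ m) :
    condExpK σ V n m j (fun ρ => (Rlcnt n m l ρ : ℝ)) =
      (1 / cgfc n j σ) * (Nat.choose m l : ℝ) * (-σ * risingFac (1 - σ) (l - 1)) *
        ∑ s ∈ Finset.Icc 1 (n - (j - 1)),
          (Nat.choose n s : ℝ) * cgfc s 1 (σ - l) * cgfc (n - s) (j - 1) σ *
            ∑ k ∈ Finset.range (m + 1),
              V (n + m) (j + k) / V n j *
                (gfc (m - l) k σ (-(n : ℝ) + (s : ℝ) + ((j : ℝ) - 1) * σ) / σ ^ k) := by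
  have hold : (oldSet n m).card = n := card_oldSet n m
  set new := (Finset.univ : Finset (Fin (n + m))) \ oldSet n m with hnewdef
  have hsubu : oldSet n m ⊆ Finset.univ := Finset.subset_univ _
  have hun : oldSet n m ∪ new = Finset.univ := Finset.union_sdiff_of_subset hsubu
  have hdisj : Disjoint (oldSet n m) new := Finset.disjoint_sdiff
  have hnew : new.card = m := by
    rw [hnewdef, Finset.card_sdiff_of_subset hsubu, hold, Finset.card_univ, Fintype.card_fin]
    omega
  -- fiberwise decomposition of the numerator
  have hmaps : ∀ ρ ∈ withJ n m j, restrictPart ρ (oldSet n m) ∈ partsJOf (oldSet n m) j := by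
    intro ρ hρ
    rw [withJ, Finset.mem_filter] at hρ
    obtain ⟨-, hpart, hcard⟩ := hρ
    exact mem_partsJOf.mpr ⟨restrict_isPartOn hpart hsubu, hcard⟩
  have hfib : ∀ π ∈ partsJOf (oldSet n m) j,
      (withJ n m j).filter (fun ρ => restrictPart ρ (oldSet n m) = π)
        = extSet (oldSet n m) new π := by
    intro π hπm
    obtain ⟨hπ, hπcard⟩ := mem_partsJOf.mp hπm
    ext ρ
    simp only [Finset.mem_filter, withJ, Finset.mem_univ, true_and, mem_extSet, hun]
    constructor
    · rintro ⟨⟨hpart, -⟩, hres⟩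
      exact ⟨hpart, (restrict_eq_iff hpart hπ hsubu).mp hres⟩
    · rintro ⟨hpart, hcond⟩
      have hres : restrictPart ρ (oldSet n m) = π :=
        (restrict_eq_iff hpart hπ hsubu).mpr hcond
      exact ⟨⟨hpart, by rw [hres, hπcard]⟩, hres⟩
  have hNum : ∑ ρ ∈ withJ n m j, (Rlcnt n m l ρ : ℝ) * gibbsW σ (V (n + m)) ρ
      = ∑ i ∈ Finset.Icc 1 n, (n.choose i : ℝ) *
          ((m.choose l : ℝ) * (risingFac (1 - σ) (i + l - 1) *
            (Wrec σ 0 (n - i) (j - 1) *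
              ∑ k ∈ Finset.range (m - l + 1),
                V (n + m) (j + k) *
                  Wrec σ (((j : ℝ) - 1) * σ - ((n : ℝ) - (i : ℝ))) (m - l) k))) := by
    rw [← Finset.sum_fiberwise_of_maps_to hmaps
      (fun ρ => (Rlcnt n m l ρ : ℝ) * gibbsW σ (V (n + m)) ρ)]
    have key : ∀ π ∈ partsJOf (oldSet n m) j,
        ∑ ρ ∈ (withJ n m j).filter (fun ρ => restrictPart ρ (oldSet n m) = π),
          (Rlcnt n m l ρ : ℝ) * gibbsW σ (V (n + m)) ρ
        = ∑ ρ ∈ extSet (oldSet n m) new π,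
            (∑ B ∈ π, if (∃ C ∈ ρ, B ⊆ C ∧ (C \ oldSet n m).card = l)
              then (1 : ℝ) else 0) *
              (V (n + m) ρ.card * ∏ C ∈ ρ, risingFac (1 - σ) (C.card - 1)) := by
      intro π hπm
      obtain ⟨hπ, hπcard⟩ := mem_partsJOf.mp hπm
      rw [hfib π hπm]
      apply Finset.sum_congr rfl
      intro ρ hρ
      obtain ⟨hpart, hcond⟩ := mem_extSet.mp hρ
      have hpart' : IsPartOn Finset.univ ρ := by rwa [hun] at hpart
      have hres : restrictPart ρ (oldSet n m) = π :=
        (restrict_eq_iff hpart' hπ hsubu).mpr hcond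
      rw [Rlcnt, hres, Finset.card_filter, gibbsW]
      push_cast
      rfl
    rw [Finset.sum_congr rfl key]
    have := numerator_eval σ (V (n + m)) (oldSet n m) new hdisj j l hj1
    rw [hold, hnew] at this
    exact this
  -- denominator
  have hDen : ∑ π' ∈ partsJOf (oldSet n m) j, gibbsW σ (V n) π'
      = V n j * Wrec σ 0 n j := by
    have h1 : ∀ π' ∈ partsJOf (oldSet n m) j, gibbsW σ (V n) π'
        = V n j * ∏ C ∈ π', risingFac (1 - σ) (C.card - 1) := by
      intro π' hπ'
      rw [gibbsW, (mem_partsJOf.mp hπ').2]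
    rw [Finset.sum_congr rfl h1, ← Finset.mul_sum, parts_weight_sum σ (oldSet n m) j, hold]
  have hWpos : 0 < Wrec σ 0 n j := by
    have hpw := parts_weight_sum σ (oldSet n m) j
    rw [hold] at hpw
    rw [← hpw]
    apply Finset.sum_pos
    · intro π hπm
      apply Finset.prod_pos
      intro C _
      exact risingFac_pos (by linarith) _
    · obtain ⟨π, hp, hc⟩ := exists_partsJOf j hj1 (oldSet n m) (by rw [hold]; omega)
      exact ⟨π, mem_partsJOf.mpr ⟨hp, hc⟩⟩
  have hDne : V n j * Wrec σ 0 n j ≠ 0 := by positivity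
  -- assemble
  rw [condExpK]
  rw [hNum, hDen, div_eq_iff hDne]
  -- transform the RHS
  have hIccsub : Finset.Icc 1 (n - (j - 1)) ⊆ Finset.Icc 1 n := by
    apply Finset.Icc_subset_Icc_right
    omega
  rw [Finset.sum_subset hIccsub ?hz]
  case hz =>
    intro x hx hnx
    rw [Finset.mem_Icc] at hx
    rw [Finset.mem_Icc] at hnx
    have hlt : n - x < j - 1 := by omega
    have : cgfc (n - x) (j - 1) σ = 0 := by
      rw [cgfc_Wrec, Wrec_eq_zero_of_lt σ 0 _ _ hlt, mul_zero]
    rw [this]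
    ring
  rw [Finset.mul_sum, Finset.sum_mul]
  apply Finset.sum_congr rfl
  intro i hi
  rw [Finset.mem_Icc] at hi
  -- rewrite the inner k-sum of the RHS
  have hksub : Finset.range (m - l + 1) ⊆ Finset.range (m + 1) := by
    apply Finset.range_subset_range.mpr
    omega
  rw [← Finset.sum_subset hksub ?hkz]
  case hkz =>
    intro k hk hnk
    rw [Finset.mem_range] at hk
    rw [Finset.mem_range] at hnk
    have hlt : m - l < k := by omega
    rw [gfc_eq_Wrec, Wrec_eq_zero_of_lt σ _ _ _ hlt]
    ring
  have hγeq : (-(n : ℝ) + (i : ℝ) + ((j : ℝ) - 1) * σ)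
      = ((j : ℝ) - 1) * σ - ((n : ℝ) - (i : ℝ)) := by ring
  have hkterm : ∀ k ∈ Finset.range (m - l + 1),
      V (n + m) (j + k) / V n j *
        (gfc (m - l) k σ (-(n : ℝ) + (i : ℝ) + ((j : ℝ) - 1) * σ) / σ ^ k)
      = (V (n + m) (j + k) *
          Wrec σ (((j : ℝ) - 1) * σ - ((n : ℝ) - (i : ℝ))) (m - l) k) / V n j := by
    intro k _
    rw [hγeq, gfc_eq_Wrec, mul_comm (σ ^ k) _, mul_div_assoc,
      div_self (pow_ne_zero k hσ0), mul_one]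
    ring
  rw [Finset.sum_congr rfl hkterm, ← Finset.sum_div]
  -- rising factorial factorisation
  have hrf : risingFac (1 - σ) (i + l - 1)
      = risingFac (1 - σ) (l - 1) * risingFac ((l : ℝ) - σ) i := by
    have h1 : i + l - 1 = (l - 1) + i := by omega
    rw [h1, risingFac_add]
    congr 2
    rw [Nat.cast_sub hl1]
    push_cast
    ring
  rw [hrf]
  rw [cgfc_one hi.1 (σ - (l : ℝ))]
  have hneg : (-(σ - (l : ℝ))) = (l : ℝ) - σ := by ring
  rw [hneg]
  rw [cgfc_Wrec (n - i) (j - 1) σ, cgfc_Wrec n j σ]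
  have hpow : σ ^ j = σ ^ (j - 1) * σ := by
    rw [← pow_succ]
    congr 1
    omega
  rw [hpow]
  have hWne : Wrec σ 0 n j ≠ 0 := ne_of_gt hWpos
  have hVne : V n j ≠ 0 := ne_of_gt hVnj
  have hpne : σ ^ (j - 1) ≠ 0 := pow_ne_zero _ hσ0
  field_simp
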